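/- arXiv:0804.1091 — 5 statements merged into one kernel-verified Lean document; each statement's English description precedes it below -/
import Mathlib

section
/- Let A be a (not necessarily commutative) ring, δ = (δ_1,…,δ_n) an n-tuple of pairwise commuting derivations of A, and {x^[α] : α ∈ I} a δ-descent, where I = {α ∈ ℕ^n : α_i ≤ d_i for all i} and each d_i ∈ ℕ ∪ {∞}. Then for every α ∈ I one has N_α = ⊕_{0 ≤ β ≤ α} A^δ x^[β] = ⊕_{0 ≤ β ≤ α} x^[β] A^δ; that is, every element of N_α is uniquely a sum Σ_{0 ≤ β ≤ α} c_β x^[β] with all c_β ∈ A^δ, and also uniquely a sum Σ_{0 ≤ β ≤ α} x^[β] c'_β with all c'_β ∈ A^δ. -/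
def multiIter {A : Type*} {n : ℕ} (δ : Fin n → A → A) (α : Fin n → ℕ) : A → A :=
  (List.finRange n).foldr (fun i f => (δ i)^[α i] ∘ f) id

def IsDescent {A : Type*} [Ring A] {n : ℕ} (δ : Fin n → A → A) (d : Fin n → ℕ∞)
    (x : (Fin n → ℕ) → A) : Prop :=
  x 0 = 1 ∧ ∀ α β : Fin n → ℕ, (∀ i, (β i : ℕ∞) ≤ d i) →
    (α ≤ β → multiIter δ α (x β) = x (β - α)) ∧ (¬ α ≤ β → multiIter δ α (x β) = 0)

namespace DescentAux

variable {A : Type*} [Ring A] {n : ℕ} {δ : Fin n → A → A}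

theorem dzero (hadd : ∀ i a b, δ i (a + b) = δ i a + δ i b) (i : Fin n) : δ i 0 = 0 := by
  have h := hadd i 0 0
  rw [add_zero] at h
  exact left_eq_add.mp h

theorem dsub (hadd : ∀ i a b, δ i (a + b) = δ i a + δ i b) (i : Fin n) (a b : A) :
    δ i (a - b) = δ i a - δ i b := by
  have h := hadd i (a - b) b
  rw [sub_add_cancel] at h
  rw [h, add_sub_cancel_right]

theorem iter_add (hadd : ∀ i a b, δ i (a + b) = δ i a + δ i b) (i : Fin n) (k : ℕ) :
    ∀ a b, (δ i)^[k] (a + b) = (δ i)^[k] a + (δ i)^[k] b := by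
  induction k with
  | zero => intro a b; simp
  | succ k ih =>
    intro a b
    rw [Function.iterate_succ_apply, Function.iterate_succ_apply,
      Function.iterate_succ_apply, hadd, ih]

theorem iter_zero (hadd : ∀ i a b, δ i (a + b) = δ i a + δ i b) (i : Fin n) (k : ℕ) :
    (δ i)^[k] (0 : A) = 0 := by
  induction k with
  | zero => simp
  | succ k ih => rw [Function.iterate_succ_apply, dzero hadd, ih]

theorem iter_sum (hadd : ∀ i a b, δ i (a + b) = δ i a + δ i b) (i : Fin n) (k : ℕ)
    {ι : Type*} (s : Finset ι) (f : ι → A) :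
    (δ i)^[k] (∑ b ∈ s, f b) = ∑ b ∈ s, (δ i)^[k] (f b) := by
  classical
  induction s using Finset.induction with
  | empty => simpa using iter_zero hadd i k
  | insert _ _ h ih => rw [Finset.sum_insert h, Finset.sum_insert h, iter_add hadd, ih]

theorem iter_comm (hcomm : ∀ i j a, δ i (δ j a) = δ j (δ i a)) (i j : Fin n) (k m : ℕ) (a : A) :
    (δ i)^[k] ((δ j)^[m] a) = (δ j)^[m] ((δ i)^[k] a) :=
  (Function.Commute.iterate_iterate (hcomm i j) k m) a

theorem iter_mul_left (hleib : ∀ i a b, δ i (a * b) = δ i a * b + a * δ i b) (i : Fin n)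
    {c : A} (hc : δ i c = 0) (k : ℕ) : ∀ b, (δ i)^[k] (c * b) = c * (δ i)^[k] b := by
  induction k with
  | zero => intro b; simp
  | succ k ih =>
    intro b
    rw [Function.iterate_succ_apply, Function.iterate_succ_apply, hleib, hc, zero_mul, zero_add, ih]

theorem foldr_single (i : Fin n) (k : ℕ) (l : List (Fin n)) :
    l.foldr (fun j f => (δ j)^[(Pi.single i k : Fin n → ℕ) j] ∘ f) id
      = (δ i)^[k * l.count i] := by
  induction l with
  | nil => simp
  | cons j l ih =>
    rw [List.foldr_cons, ih, List.count_cons]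
    by_cases h : j = i
    · subst h
      rw [Pi.single_eq_same]
      simp only [beq_self_eq_true, if_true]
      rw [show k * (l.count j + 1) = k + k * l.count j by ring, Function.iterate_add]
    · simp [Pi.single_eq_of_ne h, h]

theorem multiIter_single (i : Fin n) (k : ℕ) (a : A) :
    multiIter δ (Pi.single i k) a = (δ i)^[k] a := by
  unfold multiIter
  rw [foldr_single, List.count_eq_one_of_mem (List.nodup_finRange n) (List.mem_finRange i),
    mul_one]

theorem single_le {i : Fin n} {k : ℕ} {β : Fin n → ℕ} :
    (Pi.single i k : Fin n → ℕ) ≤ β ↔ k ≤ β i := by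
  constructor
  · intro h; simpa using h i
  · intro h j
    rcases eq_or_ne j i with rfl | hj
    · simpa using h
    · simp [Pi.single_eq_of_ne hj]

theorem xval {d : Fin n → ℕ∞} {x : (Fin n → ℕ) → A} (hx : IsDescent δ d x)
    {β : Fin n → ℕ} (hβ : ∀ i, (β i : ℕ∞) ≤ d i) (i : Fin n) (k : ℕ) :
    (δ i)^[k] (x β) = if k ≤ β i then x (β - Pi.single i k) else 0 := by
  rw [← multiIter_single]
  by_cases h : k ≤ β i
  · rw [if_pos h, (hx.2 _ β hβ).1 (single_le.mpr h)]
  · rw [if_neg h, (hx.2 _ β hβ).2 (fun hh => h (single_le.mp hh))]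

theorem Icc_split (α : Fin n → ℕ) (i : Fin n) (hi : 1 ≤ α i) :
    Finset.Icc (0 : Fin n → ℕ) α =
      Finset.Icc 0 (α - Pi.single i 1) ∪ Finset.Icc (Pi.single i (α i)) α := by
  ext β
  simp only [Finset.mem_union, Finset.mem_Icc]
  constructor
  · rintro ⟨h0, h⟩
    by_cases hb : α i ≤ β i
    · exact Or.inr ⟨single_le.mpr hb, h⟩
    · refine Or.inl ⟨h0, fun j => ?_⟩
      rcases eq_or_ne j i with rfl | hj
      · have := h j
        simp only [Pi.sub_apply, Pi.single_eq_same]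
        omega
      · simpa [Pi.single_eq_of_ne hj] using h j
  · rintro (⟨h0, h⟩ | ⟨h1, h2⟩)
    · exact ⟨h0, fun j => le_trans (h j) tsub_le_self⟩
    · exact ⟨fun j => Nat.zero_le _, h2⟩

theorem Icc_disj (α : Fin n → ℕ) (i : Fin n) (hi : 1 ≤ α i) :
    Disjoint (Finset.Icc (0 : Fin n → ℕ) (α - Pi.single i 1))
      (Finset.Icc (Pi.single i (α i)) α) := by
  rw [Finset.disjoint_left]
  intro β h1 h2
  simp only [Finset.mem_Icc] at h1 h2
  have ha := h1.2 i
  have hb := single_le.mp h2.1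
  simp only [Pi.sub_apply, Pi.single_eq_same] at ha
  have hc := h1.1 i
  omega

theorem Icc_map (α : Fin n → ℕ) (i : Fin n) :
    Finset.Icc (Pi.single i (α i)) α =
      Finset.map (addLeftEmbedding (Pi.single i (α i) : Fin n → ℕ))
        (Finset.Icc 0 (α - Pi.single i (α i))) := by
  rw [Finset.map_add_left_Icc, add_zero, add_tsub_cancel_of_le (single_le.mpr le_rfl)]

theorem sum_sub_single_lt (α : Fin n → ℕ) (i : Fin n) {k : ℕ} (hk : 1 ≤ k) (hkα : k ≤ α i) :
    (∑ j : Fin n, (α - Pi.single i k : Fin n → ℕ) j) < ∑ j : Fin n, α j := by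
  apply Finset.sum_lt_sum (fun j _ => by simp only [Pi.sub_apply]; omega)
  exact ⟨i, Finset.mem_univ i, by simp only [Pi.sub_apply, Pi.single_eq_same]; omega⟩

theorem sub_bound {d : Fin n → ℕ∞} {α : Fin n → ℕ} (hα : ∀ j, (α j : ℕ∞) ≤ d j)
    (v : Fin n → ℕ) (j : Fin n) : (((α - v) j : ℕ) : ℕ∞) ≤ d j := by
  refine le_trans ?_ (hα j)
  exact_mod_cast (by simp only [Pi.sub_apply]; omega : (α - v) j ≤ α j)


theorem iter_sub (hadd : ∀ i a b, δ i (a + b) = δ i a + δ i b) (i : Fin n) (k : ℕ) :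
    ∀ a b, (δ i)^[k] (a - b) = (δ i)^[k] a - (δ i)^[k] b := by
  induction k with
  | zero => intro a b; simp
  | succ k ih =>
    intro a b
    rw [Function.iterate_succ_apply, Function.iterate_succ_apply,
      Function.iterate_succ_apply, dsub hadd, ih]

theorem mem_bound {d : Fin n → ℕ∞} {α β : Fin n → ℕ} (hβ : β ≤ α)
    (hα : ∀ l, (α l : ℕ∞) ≤ d l) (l : Fin n) : ((β l : ℕ) : ℕ∞) ≤ d l :=
  le_trans (by exact_mod_cast hβ l) (hα l)

theorem exists_left (hadd : ∀ i a b, δ i (a + b) = δ i a + δ i b)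
    (hleib : ∀ i a b, δ i (a * b) = δ i a * b + a * δ i b)
    (hcomm : ∀ i j a, δ i (δ j a) = δ j (δ i a))
    {d : Fin n → ℕ∞} {x : (Fin n → ℕ) → A} (hx : IsDescent δ d x) :
    ∀ N : ℕ, ∀ α : Fin n → ℕ, (∑ j : Fin n, α j) = N → (∀ j, (α j : ℕ∞) ≤ d j) →
    ∀ a : A, (∀ j, (δ j)^[α j + 1] a = 0) →
    ∃ c : (Fin n → ℕ) → A, (∀ β j, δ j (c β) = 0) ∧
      a = ∑ β ∈ Finset.Icc 0 α, c β * x β := by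
  intro N
  induction N using Nat.strong_induction_on with
  | _ N ih =>
  intro α hN hαd a ha
  by_cases h0 : α = 0
  · subst h0
    refine ⟨fun _ => a, fun β j => by simpa using ha j, ?_⟩
    simp [hx.1]
  · obtain ⟨i, hi0⟩ : ∃ i, α i ≠ 0 := by
      by_contra h; push_neg at h; exact h0 (funext h)
    have hi : 1 ≤ α i := Nat.one_le_iff_ne_zero.mpr hi0
    have hvα : (Pi.single i (α i) : Fin n → ℕ) ≤ α := single_le.mpr le_rfl
    -- b := (δ i)^[α i] a lies in N_{α - single i (α i)}
    have hb : ∀ j, (δ j)^[(α - Pi.single i (α i) : Fin n → ℕ) j + 1] ((δ i)^[α i] a) = 0 := by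
      intro j
      rcases eq_or_ne j i with rfl | hj
      · have h1 : (α - Pi.single j (α j) : Fin n → ℕ) j = 0 := by
          simp [Pi.sub_apply, Pi.single_eq_same]
        rw [h1, ← Function.iterate_add_apply]
        have h2 : 0 + 1 + α j = α j + 1 := by omega
        rw [h2]; exact ha j
      · have h1 : (α - Pi.single i (α i) : Fin n → ℕ) j = α j := by
          simp [Pi.sub_apply, Pi.single_eq_of_ne hj]
        rw [h1, iter_comm hcomm, ha j, iter_zero hadd]
    obtain ⟨cA, hcA, hbA⟩ := ih _ (hN ▸ sum_sub_single_lt α i hi le_rfl)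
      (α - Pi.single i (α i)) rfl (sub_bound hαd _) _ hb
    have hβv : ∀ β ∈ Finset.Icc (0 : Fin n → ℕ) (α - Pi.single i (α i)),
        β + Pi.single i (α i) ≤ α := by
      intro β hβ
      rw [Finset.mem_Icc] at hβ
      calc β + Pi.single i (α i) ≤ (α - Pi.single i (α i)) + Pi.single i (α i) :=
            add_le_add_left hβ.2 _
        _ = α := tsub_add_cancel_of_le hvα
    -- a' := a - S lies in N_{α - single i 1}
    have ha' : ∀ j, (δ j)^[(α - Pi.single i 1 : Fin n → ℕ) j + 1]
        (a - ∑ β ∈ Finset.Icc (0 : Fin n → ℕ) (α - Pi.single i (α i)),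
          cA β * x (β + Pi.single i (α i))) = 0 := by
      intro j
      rw [iter_sub hadd, iter_sum hadd]
      rcases eq_or_ne j i with rfl | hj
      · have h1 : (α - Pi.single j 1 : Fin n → ℕ) j + 1 = α j := by
          simp only [Pi.sub_apply, Pi.single_eq_same]; omega
        rw [h1]
        have h2 : ∑ β ∈ Finset.Icc (0 : Fin n → ℕ) (α - Pi.single j (α j)),
            (δ j)^[α j] (cA β * x (β + Pi.single j (α j)))
            = ∑ β ∈ Finset.Icc (0 : Fin n → ℕ) (α - Pi.single j (α j)), cA β * x β := by
          apply Finset.sum_congr rfl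
          intro β hβ
          rw [iter_mul_left hleib j (hcA β j), xval hx (mem_bound (hβv β hβ) hαd),
            if_pos (by simp [Pi.add_apply, Pi.single_eq_same])]
          congr 1
          rw [add_tsub_cancel_right]
        rw [h2, ← hbA, sub_self]
      · have h1 : (α - Pi.single i 1 : Fin n → ℕ) j = α j := by
          simp [Pi.sub_apply, Pi.single_eq_of_ne hj]
        rw [h1]
        have h2 : ∑ β ∈ Finset.Icc (0 : Fin n → ℕ) (α - Pi.single i (α i)),
            (δ j)^[α j + 1] (cA β * x (β + Pi.single i (α i))) = 0 := by
          apply Finset.sum_eq_zero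
          intro β hβ
          rw [iter_mul_left hleib j (hcA β j), xval hx (mem_bound (hβv β hβ) hαd), if_neg, mul_zero]
          rw [Finset.mem_Icc] at hβ
          have h3 := hβ.2 j
          simp only [Pi.add_apply, Pi.single_eq_of_ne hj, Pi.sub_apply] at h3 ⊢
          omega
        rw [h2, ha j, sub_zero]
    obtain ⟨cB, hcB, hbB⟩ := ih _ (hN ▸ sum_sub_single_lt α i le_rfl hi)
      (α - Pi.single i 1) rfl (sub_bound hαd _) _ ha'
    refine ⟨fun γ => if α i ≤ γ i then cA (γ - Pi.single i (α i)) else cB γ, ?_, ?_⟩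
    · intro β j; dsimp only; split
      · exact hcA _ j
      · exact hcB _ j
    · rw [Icc_split α i hi, Finset.sum_union (Icc_disj α i hi)]
      have e1 : ∑ γ ∈ Finset.Icc (0 : Fin n → ℕ) (α - Pi.single i 1),
          (if α i ≤ γ i then cA (γ - Pi.single i (α i)) else cB γ) * x γ
          = ∑ γ ∈ Finset.Icc (0 : Fin n → ℕ) (α - Pi.single i 1), cB γ * x γ := by
        apply Finset.sum_congr rfl
        intro γ hγ
        rw [Finset.mem_Icc] at hγ
        have h3 := hγ.2 i
        simp only [Pi.sub_apply, Pi.single_eq_same] at h3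
        rw [if_neg (by omega)]
      have e2 : ∑ γ ∈ Finset.Icc (Pi.single i (α i) : Fin n → ℕ) α,
          (if α i ≤ γ i then cA (γ - Pi.single i (α i)) else cB γ) * x γ
          = ∑ β ∈ Finset.Icc (0 : Fin n → ℕ) (α - Pi.single i (α i)),
            cA β * x (β + Pi.single i (α i)) := by
        rw [Icc_map α i, Finset.sum_map]
        apply Finset.sum_congr rfl
        intro γ hγ
        have h4 : addLeftEmbedding (Pi.single i (α i) : Fin n → ℕ) γ
            = Pi.single i (α i) + γ := rfl
        rw [h4, if_pos (by simp [Pi.add_apply, Pi.single_eq_same]), add_tsub_cancel_left,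
          add_comm]
      rw [e1, e2, ← hbB]
      exact (sub_add_cancel _ _).symm


theorem zero_left (hadd : ∀ i a b, δ i (a + b) = δ i a + δ i b)
    (hleib : ∀ i a b, δ i (a * b) = δ i a * b + a * δ i b)
    {d : Fin n → ℕ∞} {x : (Fin n → ℕ) → A} (hx : IsDescent δ d x) :
    ∀ N : ℕ, ∀ α : Fin n → ℕ, (∑ j : Fin n, α j) = N → (∀ j, (α j : ℕ∞) ≤ d j) →
    ∀ c : (Fin n → ℕ) → A, (∀ β j, δ j (c β) = 0) →
    (∑ β ∈ Finset.Icc 0 α, c β * x β) = 0 →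
    ∀ β ∈ Finset.Icc 0 α, c β = 0 := by
  intro N
  induction N using Nat.strong_induction_on with
  | _ N ih =>
  intro α hN hαd c hc hsum β hβ
  by_cases h0 : α = 0
  · subst h0
    simp only [Finset.Icc_self, Finset.mem_singleton] at hβ
    subst hβ
    simpa [hx.1] using hsum
  · obtain ⟨i, hi0⟩ : ∃ i, α i ≠ 0 := by
      by_contra h; push_neg at h; exact h0 (funext h)
    have hi : 1 ≤ α i := Nat.one_le_iff_ne_zero.mpr hi0
    have hvα : (Pi.single i (α i) : Fin n → ℕ) ≤ α := single_le.mpr le_rfl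
    -- apply (δ i)^[α i] to hsum
    have h1 := congrArg ((δ i)^[α i]) hsum
    rw [iter_sum hadd, iter_zero hadd] at h1
    rw [Icc_split α i hi, Finset.sum_union (Icc_disj α i hi)] at h1
    have e1 : ∑ γ ∈ Finset.Icc (0 : Fin n → ℕ) (α - Pi.single i 1),
        (δ i)^[α i] (c γ * x γ) = 0 := by
      apply Finset.sum_eq_zero
      intro γ hγ
      rw [Finset.mem_Icc] at hγ
      rw [iter_mul_left hleib i (hc γ i), xval hx (mem_bound (le_trans hγ.2 tsub_le_self) hαd),
        if_neg, mul_zero]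
      have h3 := hγ.2 i
      simp only [Pi.sub_apply, Pi.single_eq_same] at h3
      omega
    have e2 : ∑ γ ∈ Finset.Icc (Pi.single i (α i) : Fin n → ℕ) α, (δ i)^[α i] (c γ * x γ)
        = ∑ γ ∈ Finset.Icc (0 : Fin n → ℕ) (α - Pi.single i (α i)),
          c (Pi.single i (α i) + γ) * x γ := by
      rw [Icc_map α i, Finset.sum_map]
      apply Finset.sum_congr rfl
      intro γ hγ
      rw [Finset.mem_Icc] at hγ
      have h4 : addLeftEmbedding (Pi.single i (α i) : Fin n → ℕ) γ
          = Pi.single i (α i) + γ := rfl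
      have h5 : Pi.single i (α i) + γ ≤ α := by
        calc Pi.single i (α i) + γ = γ + Pi.single i (α i) := add_comm _ _
          _ ≤ (α - Pi.single i (α i)) + Pi.single i (α i) := add_le_add_left hγ.2 _
          _ = α := tsub_add_cancel_of_le hvα
      rw [h4, iter_mul_left hleib i (hc _ i), xval hx (mem_bound h5 hαd),
        if_pos (by simp [Pi.add_apply, Pi.single_eq_same]), add_tsub_cancel_left]
    rw [e1, e2, zero_add] at h1
    -- coefficients with i-th index = α i vanish
    have h2 := ih _ (hN ▸ sum_sub_single_lt α i hi le_rfl) (α - Pi.single i (α i)) rfl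
      (sub_bound hαd _) (fun γ => c (Pi.single i (α i) + γ)) (fun γ j => hc _ j) h1
    -- remaining sum vanishes
    have h6 : ∀ γ ∈ Finset.Icc (Pi.single i (α i) : Fin n → ℕ) α, c γ = 0 := by
      intro γ hγ
      rw [Finset.mem_Icc] at hγ
      have h7 : γ = Pi.single i (α i) + (γ - Pi.single i (α i)) :=
        (add_tsub_cancel_of_le hγ.1).symm
      rw [h7]
      apply h2
      rw [Finset.mem_Icc]
      exact ⟨fun l => Nat.zero_le _, tsub_le_tsub_right hγ.2 _⟩
    rw [Icc_split α i hi, Finset.sum_union (Icc_disj α i hi)] at hsum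
    have e3 : ∑ γ ∈ Finset.Icc (Pi.single i (α i) : Fin n → ℕ) α, c γ * x γ = 0 :=
      Finset.sum_eq_zero fun γ hγ => by rw [h6 γ hγ, zero_mul]
    rw [e3, add_zero] at hsum
    have h8 := ih _ (hN ▸ sum_sub_single_lt α i le_rfl hi) (α - Pi.single i 1) rfl
      (sub_bound hαd _) _ (fun γ j => hc _ j) hsum
    rw [Icc_split α i hi, Finset.mem_union] at hβ
    rcases hβ with hβ | hβ
    · exact h8 β hβ
    · exact h6 β hβ

theorem mem_left (hadd : ∀ i a b, δ i (a + b) = δ i a + δ i b)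
    (hleib : ∀ i a b, δ i (a * b) = δ i a * b + a * δ i b)
    {d : Fin n → ℕ∞} {x : (Fin n → ℕ) → A} (hx : IsDescent δ d x)
    {α : Fin n → ℕ} (hαd : ∀ j, (α j : ℕ∞) ≤ d j)
    {c : (Fin n → ℕ) → A} (hc : ∀ β j, δ j (c β) = 0) (j : Fin n) :
    (δ j)^[α j + 1] (∑ β ∈ Finset.Icc 0 α, c β * x β) = 0 := by
  rw [iter_sum hadd]
  apply Finset.sum_eq_zero
  intro β hβ
  rw [Finset.mem_Icc] at hβ
  have h3 : β j ≤ α j := hβ.2 j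
  rw [iter_mul_left hleib j (hc β j), xval hx (mem_bound hβ.2 hαd),
    if_neg (by omega : ¬ α j + 1 ≤ β j), mul_zero]


theorem unique_left (hadd : ∀ i a b, δ i (a + b) = δ i a + δ i b)
    (hleib : ∀ i a b, δ i (a * b) = δ i a * b + a * δ i b)
    {d : Fin n → ℕ∞} {x : (Fin n → ℕ) → A} (hx : IsDescent δ d x)
    {α : Fin n → ℕ} (hαd : ∀ j, (α j : ℕ∞) ≤ d j) :
    ∀ c c' : (Fin n → ℕ) → A, (∀ β j, δ j (c β) = 0) → (∀ β j, δ j (c' β) = 0) →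
    (∑ β ∈ Finset.Icc 0 α, c β * x β) = (∑ β ∈ Finset.Icc 0 α, c' β * x β) →
    ∀ β ∈ Finset.Icc 0 α, c β = c' β := by
  intro c c' hc hc' hsum β hβ
  have hzero : (∑ γ ∈ Finset.Icc 0 α, (c γ - c' γ) * x γ) = 0 := by
    simp only [sub_mul]
    rw [Finset.sum_sub_distrib, hsum, sub_self]
  have h := zero_left hadd hleib hx (∑ j : Fin n, α j) α rfl hαd (fun γ => c γ - c' γ)
    (fun γ j => by rw [dsub hadd, hc, hc', sub_zero]) hzero β hβ
  exact sub_eq_zero.mp h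

/-! ### Opposite ring transfer -/

variable (δ) in
/-- The derivations transported to the opposite ring. -/
def opD : Fin n → Aᵐᵒᵖ → Aᵐᵒᵖ := fun i a => MulOpposite.op (δ i a.unop)

theorem opD_iter (i : Fin n) (k : ℕ) (a : Aᵐᵒᵖ) :
    (opD δ i)^[k] a = MulOpposite.op ((δ i)^[k] a.unop) := by
  induction k generalizing a with
  | zero => simp
  | succ k ih =>
    rw [Function.iterate_succ_apply, ih, Function.iterate_succ_apply]
    simp [opD]

theorem opD_multiIter (γ : Fin n → ℕ) (a : Aᵐᵒᵖ) :
    multiIter (opD δ) γ a = MulOpposite.op (multiIter δ γ a.unop) := by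
  unfold multiIter
  suffices h : ∀ l : List (Fin n), ∀ a : Aᵐᵒᵖ,
      l.foldr (fun i f => (opD δ i)^[γ i] ∘ f) id a
        = MulOpposite.op (l.foldr (fun i f => (δ i)^[γ i] ∘ f) id a.unop) from h _ a
  intro l
  induction l with
  | nil => intro a; simp
  | cons j l ih =>
    intro a
    simp only [List.foldr_cons, Function.comp_apply, ih, opD_iter, MulOpposite.unop_op]

theorem opD_descent {d : Fin n → ℕ∞} {x : (Fin n → ℕ) → A} (hx : IsDescent δ d x) :
    IsDescent (opD δ) d (fun β => MulOpposite.op (x β)) := by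
  refine ⟨by simp [hx.1], fun γ β hβ => ⟨fun h => ?_, fun h => ?_⟩⟩
  · rw [opD_multiIter]
    simp [(hx.2 γ β hβ).1 h]
  · rw [opD_multiIter]
    simp [(hx.2 γ β hβ).2 h]

theorem opD_add (hadd : ∀ i a b, δ i (a + b) = δ i a + δ i b) :
    ∀ (i : Fin n) (a b : Aᵐᵒᵖ), opD δ i (a + b) = opD δ i a + opD δ i b := by
  intro i a b
  simp [opD, hadd]

theorem opD_leib (hleib : ∀ i a b, δ i (a * b) = δ i a * b + a * δ i b) :
    ∀ (i : Fin n) (a b : Aᵐᵒᵖ), opD δ i (a * b) = opD δ i a * b + a * opD δ i b := by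
  intro i a b
  show MulOpposite.op (δ i (a * b).unop) = _
  rw [MulOpposite.unop_mul, hleib, MulOpposite.op_add, MulOpposite.op_mul, MulOpposite.op_mul,
    MulOpposite.op_unop, MulOpposite.op_unop]
  exact add_comm _ _

theorem opD_comm (hcomm : ∀ i j a, δ i (δ j a) = δ j (δ i a)) :
    ∀ (i j : Fin n) (a : Aᵐᵒᵖ), opD δ i (opD δ j a) = opD δ j (opD δ i a) := by
  intro i j a
  simp [opD, hcomm]

end DescentAux

/-- **Lemma (N_α = ⊕ A^δ x^[β] = ⊕ x^[β] A^δ).**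
Let `A` be a ring, `δ = (δ_1,…,δ_n)` pairwise commuting derivations of `A`, and
`{x^[α] : α ∈ I}` a `δ`-descent, `I = {α : α_i ≤ d_i}`.  For every `α ∈ I`,
an element `a` belongs to `N_α = {a : δ_i^{α_i+1} a = 0 ∀ i}` iff it is a sum
`Σ_{0 ≤ β ≤ α} c_β x^[β]` with all `c_β ∈ A^δ`, the coefficients `c_β` being unique;
and likewise with coefficients on the right. -/
theorem descent_filtration_decomposition
    {A : Type*} [Ring A] {n : ℕ} (δ : Fin n → A → A)
    (hadd : ∀ i a b, δ i (a + b) = δ i a + δ i b)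
    (hleib : ∀ i a b, δ i (a * b) = δ i a * b + a * δ i b)
    (hcomm : ∀ i j a, δ i (δ j a) = δ j (δ i a))
    (d : Fin n → ℕ∞) (x : (Fin n → ℕ) → A) (hx : IsDescent δ d x)
    (α : Fin n → ℕ) (hα : ∀ i, (α i : ℕ∞) ≤ d i) :
    (∀ a : A, (∀ i, (δ i)^[α i + 1] a = 0) ↔
        ∃ c : (Fin n → ℕ) → A, (∀ β i, δ i (c β) = 0) ∧
          a = ∑ β ∈ Finset.Icc 0 α, c β * x β) ∧
    (∀ c c' : (Fin n → ℕ) → A, (∀ β i, δ i (c β) = 0) → (∀ β i, δ i (c' β) = 0) →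
        (∑ β ∈ Finset.Icc 0 α, c β * x β) = (∑ β ∈ Finset.Icc 0 α, c' β * x β) →
        ∀ β ∈ Finset.Icc 0 α, c β = c' β) ∧
    (∀ a : A, (∀ i, (δ i)^[α i + 1] a = 0) ↔
        ∃ c : (Fin n → ℕ) → A, (∀ β i, δ i (c β) = 0) ∧
          a = ∑ β ∈ Finset.Icc 0 α, x β * c β) ∧
    (∀ c c' : (Fin n → ℕ) → A, (∀ β i, δ i (c β) = 0) → (∀ β i, δ i (c' β) = 0) →
        (∑ β ∈ Finset.Icc 0 α, x β * c β) = (∑ β ∈ Finset.Icc 0 α, x β * c' β) →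
        ∀ β ∈ Finset.Icc 0 α, c β = c' β) := by
  classical
  have op_sum : ∀ (s : Finset (Fin n → ℕ)) (f : (Fin n → ℕ) → A),
      MulOpposite.op (∑ b ∈ s, f b) = ∑ b ∈ s, MulOpposite.op (f b) := by
    intro s f
    induction s using Finset.induction with
    | empty => simp
    | insert _ _ h ih => rw [Finset.sum_insert h, Finset.sum_insert h, MulOpposite.op_add, ih]
  have unop_sum : ∀ (s : Finset (Fin n → ℕ)) (f : (Fin n → ℕ) → Aᵐᵒᵖ),
      MulOpposite.unop (∑ b ∈ s, f b) = ∑ b ∈ s, MulOpposite.unop (f b) := by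
    intro s f
    induction s using Finset.induction with
    | empty => simp
    | insert _ _ h ih => rw [Finset.sum_insert h, Finset.sum_insert h, MulOpposite.unop_add, ih]
  have haddo := DescentAux.opD_add (δ := δ) hadd
  have hleibo := DescentAux.opD_leib (δ := δ) hleib
  have hcommo := DescentAux.opD_comm (δ := δ) hcomm
  have hxo := DescentAux.opD_descent hx
  refine ⟨?_, DescentAux.unique_left hadd hleib hx hα, ?_, ?_⟩
  · intro a
    constructor
    · intro ha
      exact DescentAux.exists_left hadd hleib hcomm hx (∑ j : Fin n, α j) α rfl hα a ha
    · rintro ⟨c, hc, rfl⟩ i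
      exact DescentAux.mem_left hadd hleib hx hα hc i
  · intro a
    constructor
    · intro ha
      have ha' : ∀ j, (DescentAux.opD δ j)^[α j + 1] (MulOpposite.op a) = 0 := by
        intro j
        rw [DescentAux.opD_iter]
        simp [ha j]
      obtain ⟨c, hc, hce⟩ := DescentAux.exists_left haddo hleibo hcommo hxo
        (∑ j : Fin n, α j) α rfl hα _ ha'
      refine ⟨fun β => (c β).unop, fun β j => ?_, ?_⟩
      · have h1 := congrArg MulOpposite.unop (hc β j)
        simpa [DescentAux.opD] using h1
      · have h2 := congrArg MulOpposite.unop hce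
        rw [MulOpposite.unop_op, unop_sum] at h2
        rw [h2]
        exact Finset.sum_congr rfl fun β _ => by rw [MulOpposite.unop_mul, MulOpposite.unop_op]
    · rintro ⟨c, hc, rfl⟩ i
      have hco : ∀ β j, DescentAux.opD δ j (MulOpposite.op (c β)) = 0 := by
        intro β j
        simp [DescentAux.opD, hc β j]
      have h3 := DescentAux.mem_left haddo hleibo hxo hα hco i
      rw [DescentAux.opD_iter] at h3
      have h4 : (MulOpposite.op (∑ β ∈ Finset.Icc 0 α, x β * c β) : Aᵐᵒᵖ)
          = ∑ β ∈ Finset.Icc 0 α, MulOpposite.op (c β) * MulOpposite.op (x β) := by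
        rw [op_sum]
        exact Finset.sum_congr rfl fun β _ => MulOpposite.op_mul _ _
      rw [← h4, MulOpposite.unop_op] at h3
      exact MulOpposite.op_injective (by simpa using h3)
  · intro c c' hc hc' hsum β hβ
    have hco : ∀ β j, DescentAux.opD δ j (MulOpposite.op (c β)) = 0 := fun β j => by
      simp [DescentAux.opD, hc β j]
    have hco' : ∀ β j, DescentAux.opD δ j (MulOpposite.op (c' β)) = 0 := fun β j => by
      simp [DescentAux.opD, hc' β j]
    have hsumo : (∑ γ ∈ Finset.Icc 0 α, MulOpposite.op (c γ) * MulOpposite.op (x γ))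
        = ∑ γ ∈ Finset.Icc 0 α, MulOpposite.op (c' γ) * MulOpposite.op (x γ) := by
      have e : ∀ (cc : (Fin n → ℕ) → A),
          (∑ γ ∈ Finset.Icc 0 α, MulOpposite.op (cc γ) * MulOpposite.op (x γ))
            = MulOpposite.op (∑ γ ∈ Finset.Icc 0 α, x γ * cc γ) := by
        intro cc
        rw [op_sum]
        exact Finset.sum_congr rfl fun γ _ => (MulOpposite.op_mul _ _).symm
      rw [e c, e c', hsum]
    have h5 := DescentAux.unique_left haddo hleibo hxo hα _ _ hco hco' hsumo β hβ
    exact MulOpposite.op_injective h5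
end

section
/- Let A be a (not necessarily commutative) ring, δ = (δ_1,…,δ_n) pairwise commuting derivations of A, and {x^[α] : α ∈ I} a δ-descent, where I = {α ∈ ℕ^n : α_i ≤ d_i for all i}, d_i ∈ ℕ ∪ {∞}. For a family {x'^[α] : α ∈ I} of elements of A the following are equivalent: (1) {x'^[α]} is a δ-descent; (2) x'^[0] = 1 and there exist elements λ_γ ∈ A^δ (indexed by nonzero γ ∈ I) such that x'^[α] = x^[α] + Σ_{0 ≠ β ≤ α} λ_β x^[α−β] for every nonzero α ∈ I; (3) x'^[0] = 1 and there exist elements μ_γ ∈ A^δ (nonzero γ ∈ I) such that x'^[α] = x^[α] + Σ_{0 ≠ β ≤ α} x^[α−β] μ_β for every nonzero α ∈ I. -/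
set_option linter.unusedVariables false

section Helpers
variable {A : Type*} [Ring A] {n : ℕ} (δ : Fin n → A → A)

lemma multiIter_induct (P : (A → A) → Prop) (hid : P id)
    (hcomp : ∀ f g, P f → P g → P (f ∘ g)) (hδ : ∀ i, P (δ i)) (α : Fin n → ℕ) :
    P (multiIter δ α) := by
  have hit : ∀ (f : A → A), P f → ∀ k, P f^[k] := by
    intro f hf k
    induction k with
    | zero => simpa using hid
    | succ k ih => rw [Function.iterate_succ']; exact hcomp _ _ hf ih
  unfold multiIter
  induction List.finRange n with
  | nil => exact hid
  | cons i l ih => exact hcomp ((δ i)^[α i]) _ (hit _ (hδ i) (α i)) ih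

lemma dZero (hadd : ∀ i (a b : A), δ i (a + b) = δ i a + δ i b) (i : Fin n) :
    δ i (0 : A) = 0 := by
  have h := hadd i 0 0
  rw [add_zero] at h
  exact (add_eq_left.mp h.symm)

lemma dSub (hadd : ∀ i (a b : A), δ i (a + b) = δ i a + δ i b) (i : Fin n) (a b : A) :
    δ i (a - b) = δ i a - δ i b := by
  have h := hadd i (a - b) b
  rw [sub_add_cancel] at h
  exact eq_sub_of_add_eq h.symm

lemma dSum (hadd : ∀ i (a b : A), δ i (a + b) = δ i a + δ i b) {ι : Type*} (i : Fin n)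
    (s : Finset ι) (f : ι → A) :
    δ i (∑ j ∈ s, f j) = ∑ j ∈ s, δ i (f j) := by
  classical
  induction s using Finset.induction with
  | empty => simpa using dZero δ hadd i
  | insert a s h ih => rw [Finset.sum_insert h, hadd, ih, Finset.sum_insert h]

lemma multiIter_add (hadd : ∀ i (a b : A), δ i (a + b) = δ i a + δ i b) (α : Fin n → ℕ)
    (a b : A) :
    multiIter δ α (a + b) = multiIter δ α a + multiIter δ α b :=
  multiIter_induct δ (fun f => ∀ a b, f (a + b) = f a + f b) (fun _ _ => rfl)
    (fun f g hf hg a b => by simp only [Function.comp_apply, hg, hf]) hadd α a b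

lemma multiIter_zero (hadd : ∀ i (a b : A), δ i (a + b) = δ i a + δ i b) (α : Fin n → ℕ) :
    multiIter δ α (0 : A) = 0 :=
  multiIter_induct δ (fun f => f 0 = 0) rfl
    (fun f g hf hg => by simp only [Function.comp_apply, hg, hf]) (dZero δ hadd) α

lemma multiIter_sum (hadd : ∀ i (a b : A), δ i (a + b) = δ i a + δ i b) {ι : Type*}
    (α : Fin n → ℕ) (s : Finset ι) (f : ι → A) :
    multiIter δ α (∑ j ∈ s, f j) = ∑ j ∈ s, multiIter δ α (f j) := by
  classical
  induction s using Finset.induction with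
  | empty => simpa using multiIter_zero δ hadd α
  | insert a s h ih => rw [Finset.sum_insert h, multiIter_add δ hadd, ih, Finset.sum_insert h]

lemma multiIter_const_mul (hleib : ∀ i (a b : A), δ i (a * b) = δ i a * b + a * δ i b)
    (c : A) (hc : ∀ i, δ i c = 0) (α : Fin n → ℕ) (a : A) :
    multiIter δ α (c * a) = c * multiIter δ α a :=
  multiIter_induct δ (fun f => ∀ a, f (c * a) = c * f a) (fun _ => rfl)
    (fun f g hf hg a => by simp only [Function.comp_apply, hg, hf])
    (fun i a => by rw [hleib i c a, hc, zero_mul, zero_add]) α a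

lemma foldr_iter_zero (α : Fin n → ℕ) (l : List (Fin n)) (h : ∀ j ∈ l, α j = 0) :
    l.foldr (fun i f => (δ i)^[α i] ∘ f) id = id := by
  induction l with
  | nil => rfl
  | cons j l ih =>
    simp only [List.foldr_cons, h j List.mem_cons_self, Function.iterate_zero,
      Function.id_comp]
    exact ih (fun j hj => h j (List.mem_cons_of_mem _ hj))

lemma multiIter_single (i : Fin n) (a : A) :
    multiIter δ (Pi.single i 1) a = δ i a := by
  unfold multiIter
  have key : ∀ l : List (Fin n), l.Nodup → i ∈ l →
      l.foldr (fun j f => (δ j)^[(Pi.single i 1 : Fin n → ℕ) j] ∘ f) id a = δ i a := by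
    intro l hnd hm
    induction l with
    | nil => simp at hm
    | cons j l ih =>
      rcases List.mem_cons.mp hm with rfl | h
      · have hnotin : i ∉ l := (List.nodup_cons.mp hnd).1
        simp only [List.foldr_cons, Pi.single_eq_same, Function.iterate_one,
          Function.comp_apply]
        rw [foldr_iter_zero δ _ l (fun k hk => Pi.single_eq_of_ne (by rintro rfl; exact hnotin hk) 1)]
        rfl
      · have hji : j ≠ i := by rintro rfl; exact (List.nodup_cons.mp hnd).1 h
        simp only [List.foldr_cons, Pi.single_eq_of_ne hji, Function.iterate_zero,
          Function.comp_apply, id_eq]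
        exact ih (List.nodup_cons.mp hnd).2 h
  exact key _ (List.nodup_finRange n) (List.mem_finRange i)

end Helpers

noncomputable def descentL {A : Type*} [Ring A] {n : ℕ} (d : Fin n → ℕ∞)
    (x x' : (Fin n → ℕ) → A) (γ : Fin n → ℕ) : A :=
  if h : γ = 0 ∨ ¬ ∀ i, (γ i : ℕ∞) ≤ d i then 0 else
    x' γ - x γ - ∑ β ∈ (((Finset.Icc 0 γ).erase 0).erase γ).attach,
      descentL d x x' β.1 * x (γ - β.1)
termination_by ∑ i, γ i
decreasing_by
  have hβ := β.2
  rw [Finset.mem_erase, Finset.mem_erase, Finset.mem_Icc] at hβ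
  obtain ⟨hne, hne0, -, hle⟩ := hβ
  have hlt : ∃ i, β.1 i < γ i := by
    obtain ⟨i, hi⟩ := Function.ne_iff.mp hne
    exact ⟨i, lt_of_le_of_ne (hle i) hi⟩
  obtain ⟨i, hi⟩ := hlt
  exact Finset.sum_lt_sum (fun j _ => hle j) ⟨i, Finset.mem_univ i, hi⟩

theorem descent_char_l
    {A : Type*} [Ring A] {n : ℕ} (δ : Fin n → A → A)
    (hadd : ∀ i a b, δ i (a + b) = δ i a + δ i b)
    (hleib : ∀ i a b, δ i (a * b) = δ i a * b + a * δ i b)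
    (d : Fin n → ℕ∞) (x : (Fin n → ℕ) → A) (hx : IsDescent δ d x)
    (x' : (Fin n → ℕ) → A) :
    IsDescent δ d x' ↔
      (x' 0 = 1 ∧ ∃ l : (Fin n → ℕ) → A, (∀ γ i, δ i (l γ) = 0) ∧
        ∀ α : Fin n → ℕ, α ≠ 0 → (∀ i, (α i : ℕ∞) ≤ d i) →
          x' α = x α + ∑ β ∈ (Finset.Icc 0 α).erase 0, l β * x (α - β)) := by
  constructor
  · -- forward: a descent has the required form
    intro hx'
    set l : (Fin n → ℕ) → A := descentL d x x' with hldef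
    have hunfold : ∀ γ : Fin n → ℕ, γ ≠ 0 → (∀ i, (γ i : ℕ∞) ≤ d i) →
        l γ = x' γ - x γ - ∑ β ∈ ((Finset.Icc 0 γ).erase 0).erase γ, l β * x (γ - β) := by
      intro γ h0 hI
      rw [hldef, descentL, dif_neg (by push_neg; exact ⟨h0, hI⟩),
        Finset.sum_attach (((Finset.Icc 0 γ).erase 0).erase γ)
          (fun b => descentL d x x' b * x (γ - b))]
    have hKEY : ∀ γ : Fin n → ℕ, (∀ i, (γ i : ℕ∞) ≤ d i) →
        x' γ = x γ + ∑ β ∈ (Finset.Icc 0 γ).erase 0, l β * x (γ - β) := by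
      intro γ hI
      by_cases h0 : γ = 0
      · subst h0
        simp [hx'.1, hx.1]
      · have hmem : γ ∈ (Finset.Icc 0 γ).erase 0 := by
          rw [Finset.mem_erase, Finset.mem_Icc]
          exact ⟨h0, fun j => Nat.zero_le _, le_refl _⟩
        rw [← Finset.sum_erase_add _ _ hmem]
        have hγγ : γ - γ = 0 := by funext j; exact Nat.sub_self _
        rw [hγγ, hx.1, mul_one, hunfold γ h0 hI]
        abel
    refine ⟨hx'.1, l, ?_, fun α h0 hI => hKEY α hI⟩
    have main : ∀ N : ℕ, ∀ γ : Fin n → ℕ, (∑ j, γ j) < N → ∀ i, δ i (l γ) = 0 := by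
      intro N
      induction N with
      | zero => exact fun γ h => absurd h (Nat.not_lt_zero _)
      | succ N ih =>
        intro γ hγN i
        by_cases hbad : γ = 0 ∨ ¬ ∀ j, (γ j : ℕ∞) ≤ d j
        · have hz : l γ = 0 := by rw [hldef, descentL, dif_pos hbad]
          rw [hz, dZero δ hadd i]
        · push_neg at hbad
          obtain ⟨h0, hI⟩ := hbad
          have hone : ∀ (y : (Fin n → ℕ) → A), IsDescent δ d y → ∀ γ₀ : Fin n → ℕ,
              (∀ j, (γ₀ j : ℕ∞) ≤ d j) →
              δ i (y γ₀) = if 1 ≤ γ₀ i then y (γ₀ - Pi.single i 1) else 0 := by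
            intro y hy γ₀ hγ₀
            have hsp : Pi.single i 1 ≤ γ₀ ↔ 1 ≤ γ₀ i := by
              constructor
              · intro h
                simpa using h i
              · intro h j
                by_cases hji : j = i
                · subst hji; simpa using h
                · simp [Pi.single_eq_of_ne hji]
            have h2 := hy.2 (Pi.single i 1) γ₀ hγ₀
            rw [← multiIter_single δ i (y γ₀)]
            by_cases hc : 1 ≤ γ₀ i
            · rw [if_pos hc]; exact h2.1 (hsp.mpr hc)
            · rw [if_neg hc]; exact h2.2 (fun h => hc (hsp.mp h))
          have hIsub : ∀ β : Fin n → ℕ, β ≤ γ → ∀ j, (((γ - β) j : ℕ) : ℕ∞) ≤ d j := by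
            intro β hβ j
            exact le_trans (Nat.cast_le.mpr (Nat.sub_le _ _)) (hI j)
          have hsumd : δ i (∑ β ∈ ((Finset.Icc 0 γ).erase 0).erase γ, l β * x (γ - β))
              = ∑ β ∈ ((Finset.Icc 0 γ).erase 0).erase γ, l β * δ i (x (γ - β)) := by
            rw [dSum δ hadd]
            apply Finset.sum_congr rfl
            intro β hβ
            rw [Finset.mem_erase, Finset.mem_erase, Finset.mem_Icc] at hβ
            have hsum_lt : (∑ j, β j) < N := by
              have h1 : (∑ j, β j) < ∑ j, γ j := by
                obtain ⟨j0, hj0⟩ := Function.ne_iff.mp hβ.1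
                exact Finset.sum_lt_sum (fun j _ => hβ.2.2.2 j)
                  ⟨j0, Finset.mem_univ j0, lt_of_le_of_ne (hβ.2.2.2 j0) hj0⟩
              omega
            rw [hleib, ih β hsum_lt i, zero_mul, zero_add]
          rw [hunfold γ h0 hI, dSub δ hadd, dSub δ hadd, hsumd,
            hone x' hx' γ hI, hone x hx γ hI]
          by_cases hpos : 1 ≤ γ i
          · rw [if_pos hpos, if_pos hpos]
            have hγ'le : γ - Pi.single i 1 ≤ γ := fun j => Nat.sub_le _ _
            have hγ'I : ∀ j, (((γ - Pi.single i 1 : Fin n → ℕ) j : ℕ) : ℕ∞) ≤ d j := fun j =>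
              le_trans (Nat.cast_le.mpr (hγ'le j)) (hI j)
            have hγ'i : (γ - Pi.single i 1 : Fin n → ℕ) i = γ i - 1 := by
              show γ i - (Pi.single i 1 : Fin n → ℕ) i = γ i - 1
              rw [Pi.single_eq_same]
            have hγ'j : ∀ j, j ≠ i → (γ - Pi.single i 1 : Fin n → ℕ) j = γ j := by
              intro j hji
              show γ j - (Pi.single i 1 : Fin n → ℕ) j = γ j
              rw [Pi.single_eq_of_ne hji]
              rfl
            have hterm : ∀ β ∈ ((Finset.Icc 0 γ).erase 0).erase γ,
                l β * δ i (x (γ - β)) =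
                l β * (if 1 ≤ (γ - β) i then x (γ - Pi.single i 1 - β) else 0) := by
              intro β hβ
              rw [Finset.mem_erase, Finset.mem_erase, Finset.mem_Icc] at hβ
              have hc : γ - β - Pi.single i 1 = γ - Pi.single i 1 - β := by
                funext j
                show γ j - β j - (Pi.single i 1 : Fin n → ℕ) j = (γ - Pi.single i 1 : Fin n → ℕ) j - β j
                by_cases hji : j = i
                · subst hji; rw [Pi.single_eq_same, hγ'i]; omega
                · rw [Pi.single_eq_of_ne hji, hγ'j j hji]; omega
              rw [hone x hx (γ - β) (hIsub β hβ.2.2.2), hc]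
            rw [Finset.sum_congr rfl hterm]
            have hsubset : (Finset.Icc 0 (γ - Pi.single i 1)).erase 0 ⊆
                ((Finset.Icc 0 γ).erase 0).erase γ := by
              intro β hβ
              rw [Finset.mem_erase, Finset.mem_Icc] at hβ
              rw [Finset.mem_erase, Finset.mem_erase, Finset.mem_Icc]
              refine ⟨?_, hβ.1, fun j => Nat.zero_le _, le_trans hβ.2.2 hγ'le⟩
              intro hβγ
              have h1 := hβ.2.2 i
              rw [hβγ, hγ'i] at h1
              have h2 : (γ i : ℕ) ≤ γ i - 1 := h1
              have h3 : (1 : ℕ) ≤ γ i := hpos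
              omega
            have hvan : ∀ β ∈ ((Finset.Icc 0 γ).erase 0).erase γ,
                β ∉ (Finset.Icc 0 (γ - Pi.single i 1)).erase 0 →
                l β * (if 1 ≤ (γ - β) i then x (γ - Pi.single i 1 - β) else 0) = 0 := by
              intro β hβE hβS
              rw [Finset.mem_erase, Finset.mem_erase, Finset.mem_Icc] at hβE
              have hnle : ¬ β ≤ γ - Pi.single i 1 := by
                intro hle
                exact hβS (by
                  rw [Finset.mem_erase, Finset.mem_Icc]
                  exact ⟨hβE.2.1, fun j => Nat.zero_le _, hle⟩)
              have hβi : β i = γ i := by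
                by_contra hne2
                apply hnle
                intro j
                by_cases hji : j = i
                · rw [hji, hγ'i]
                  show (β i : ℕ) ≤ γ i - 1
                  have h3 : (β i : ℕ) ≤ γ i := hβE.2.2.2 i
                  have h4 : (1 : ℕ) ≤ γ i := hpos
                  have h5 : ¬ ((β i : ℕ) = γ i) := hne2
                  omega
                · rw [hγ'j j hji]
                  exact hβE.2.2.2 j
              have hcond : ¬ 1 ≤ (γ - β) i := by
                show ¬ (1 : ℕ) ≤ γ i - β i
                have h3 : (β i : ℕ) = γ i := hβi
                omega
              rw [if_neg hcond, mul_zero]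
            rw [← Finset.sum_subset hsubset hvan]
            have hcongr : ∀ β ∈ (Finset.Icc 0 (γ - Pi.single i 1)).erase 0,
                l β * (if 1 ≤ (γ - β) i then x (γ - Pi.single i 1 - β) else 0) =
                l β * x (γ - Pi.single i 1 - β) := by
              intro β hβ
              rw [Finset.mem_erase, Finset.mem_Icc] at hβ
              have h1 : (β i : ℕ) ≤ γ i - 1 := by
                have := hβ.2.2 i
                rw [hγ'i] at this
                exact this
              have h4 : (1 : ℕ) ≤ γ i := hpos
              have hcond2 : 1 ≤ (γ - β) i := by
                show (1:ℕ) ≤ γ i - β i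
                omega
              rw [if_pos hcond2]
            rw [Finset.sum_congr rfl hcongr, hKEY (γ - Pi.single i 1) hγ'I]
            abel
          · rw [if_neg hpos, if_neg hpos]
            have hzero : ∀ β ∈ ((Finset.Icc 0 γ).erase 0).erase γ,
                l β * δ i (x (γ - β)) = 0 := by
              intro β hβ
              rw [Finset.mem_erase, Finset.mem_erase, Finset.mem_Icc] at hβ
              have h4 : ¬ (1 : ℕ) ≤ γ i := hpos
              have hcond2 : ¬ 1 ≤ (γ - β) i := by
                show ¬ (1:ℕ) ≤ γ i - β i
                omega
              rw [hone x hx (γ - β) (hIsub β hβ.2.2.2), if_neg hcond2, mul_zero]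
            rw [Finset.sum_eq_zero hzero]
            simp
    exact fun γ i => main ((∑ j, γ j) + 1) γ (Nat.lt_succ_self _) i
  · -- backward
    rintro ⟨h0, l, hl, hf⟩
    have FORM : ∀ β : Fin n → ℕ, (∀ j, (β j : ℕ∞) ≤ d j) →
        x' β = x β + ∑ β' ∈ (Finset.Icc 0 β).erase 0, l β' * x (β - β') := by
      intro β hβ
      by_cases hb : β = 0
      · subst hb; simp [h0, hx.1]
      · exact hf β hb hβ
    refine ⟨h0, fun α β hβ => ?_⟩
    have hIsub : ∀ γ₀ : Fin n → ℕ, γ₀ ≤ β → ∀ j, (γ₀ j : ℕ∞) ≤ d j :=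
      fun γ₀ h j => le_trans (Nat.cast_le.mpr (h j)) (hβ j)
    have hcalc : multiIter δ α (x' β) = multiIter δ α (x β) +
        ∑ β' ∈ (Finset.Icc 0 β).erase 0, l β' * multiIter δ α (x (β - β')) := by
      rw [FORM β hβ, multiIter_add δ hadd, multiIter_sum δ hadd]
      congr 1
      exact Finset.sum_congr rfl (fun β' _ => multiIter_const_mul δ hleib (l β') (hl β') α _)
    constructor
    · intro hαβ
      rw [hcalc, (hx.2 α β hβ).1 hαβ,
        FORM (β - α) (hIsub _ (fun j => Nat.sub_le _ _))]
      congr 1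
      have hsub : (Finset.Icc 0 (β - α)).erase 0 ⊆ (Finset.Icc 0 β).erase 0 := by
        intro β' hβ'
        rw [Finset.mem_erase, Finset.mem_Icc] at hβ'
        rw [Finset.mem_erase, Finset.mem_Icc]
        exact ⟨hβ'.1, fun j => Nat.zero_le _,
          le_trans hβ'.2.2 (fun j => Nat.sub_le _ _)⟩
      have hvan : ∀ β' ∈ (Finset.Icc 0 β).erase 0, β' ∉ (Finset.Icc 0 (β - α)).erase 0 →
          l β' * multiIter δ α (x (β - β')) = 0 := by
        intro β' hβ'b hβ's
        rw [Finset.mem_erase, Finset.mem_Icc] at hβ'b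
        have hns : ¬ β' ≤ β - α := by
          intro hle
          exact hβ's (by
            rw [Finset.mem_erase, Finset.mem_Icc]
            exact ⟨hβ'b.1, fun j => Nat.zero_le _, hle⟩)
        have hnc : ¬ α ≤ β - β' := by
          intro hle
          apply hns
          intro j
          have h1 : α j ≤ β j - β' j := hle j
          have h2 : β' j ≤ β j := hβ'b.2.2 j
          show β' j ≤ β j - α j
          omega
        rw [(hx.2 α (β - β') (hIsub _ (fun j => Nat.sub_le _ _))).2 hnc, mul_zero]
      rw [← Finset.sum_subset hsub hvan]
      apply Finset.sum_congr rfl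
      intro β' hβ'
      rw [Finset.mem_erase, Finset.mem_Icc] at hβ'
      have hcond : α ≤ β - β' := by
        intro j
        have h1 : β' j ≤ β j - α j := hβ'.2.2 j
        have h2 : α j ≤ β j := hαβ j
        show α j ≤ β j - β' j
        omega
      rw [(hx.2 α (β - β') (hIsub _ (fun j => Nat.sub_le _ _))).1 hcond]
      have heq : β - β' - α = β - α - β' := by
        funext j
        show β j - β' j - α j = β j - α j - β' j
        omega
      rw [heq]
    · intro hαβ
      rw [hcalc, (hx.2 α β hβ).2 hαβ, zero_add]
      apply Finset.sum_eq_zero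
      intro β' hβ'
      rw [Finset.mem_erase, Finset.mem_Icc] at hβ'
      have hnc : ¬ α ≤ β - β' := by
        intro hle
        apply hαβ
        intro j
        have h1 : α j ≤ β j - β' j := hle j
        have h2 : β' j ≤ β j := hβ'.2.2 j
        show α j ≤ β j
        omega
      rw [(hx.2 α (β - β') (hIsub _ (fun j => Nat.sub_le _ _))).2 hnc, mul_zero]

section Op
open MulOpposite
variable {A : Type*} [Ring A] {n : ℕ}

lemma op_sum {ι : Type*} (s : Finset ι) (f : ι → A) :
    op (∑ j ∈ s, f j) = ∑ j ∈ s, op (f j) := by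
  classical
  induction s using Finset.induction with
  | empty => simp
  | insert a s h ih => rw [Finset.sum_insert h, Finset.sum_insert h, op_add, ih]

lemma multiIter_op (δ : Fin n → A → A) (α : Fin n → ℕ) (a : A) :
    multiIter (fun i b => op (δ i (unop b))) α (op a) = op (multiIter δ α a) := by
  unfold multiIter
  have hit : ∀ (i : Fin n) (k : ℕ) (b : A),
      (fun b => op (δ i (unop b)))^[k] (op b) = op ((δ i)^[k] b) := by
    intro i k
    induction k with
    | zero => intro b; rfl
    | succ k ih =>
      intro b
      rw [Function.iterate_succ_apply', Function.iterate_succ_apply', ih, unop_op]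
  induction List.finRange n with
  | nil => rfl
  | cons i l ih => simp only [List.foldr_cons, Function.comp_apply, ih, hit]

lemma isDescent_op (δ : Fin n → A → A) (d : Fin n → ℕ∞) (y : (Fin n → ℕ) → A) :
    IsDescent (fun i b => op (δ i (unop b))) d (fun γ => op (y γ)) ↔ IsDescent δ d y := by
  unfold IsDescent
  constructor
  · rintro ⟨h1, h2⟩
    refine ⟨(op_eq_one_iff _).mp h1, fun α β hβ => ?_⟩
    have h3 := h2 α β hβ
    rw [multiIter_op] at h3
    exact ⟨fun h => op_injective (by rw [h3.1 h]),
      fun h => op_injective (by rw [h3.2 h, op_zero])⟩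
  · rintro ⟨h1, h2⟩
    refine ⟨by show op (y 0) = 1; rw [h1, op_one], fun α β hβ => ?_⟩
    have h3 := h2 α β hβ
    constructor
    · intro h; rw [multiIter_op, h3.1 h]
    · intro h; rw [multiIter_op, h3.2 h, op_zero]

end Op

/-- **Lemma (description of all δ-descents given one of them).**
Let `{x^[α] : α ∈ I}` be a `δ`-descent.  A family `{x'^[α] : α ∈ I}` is a `δ`-descent
iff `x'^[0] = 1` and `x'^[α] = x^[α] + Σ_{0 ≠ β ≤ α} λ_β x^[α-β]` for suitable constants
`λ_β ∈ A^δ`, iff `x'^[0] = 1` and `x'^[α] = x^[α] + Σ_{0 ≠ β ≤ α} x^[α-β] μ_β` for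
suitable constants `μ_β ∈ A^δ`. -/
theorem descent_characterisation
    {A : Type*} [Ring A] {n : ℕ} (δ : Fin n → A → A)
    (hadd : ∀ i a b, δ i (a + b) = δ i a + δ i b)
    (hleib : ∀ i a b, δ i (a * b) = δ i a * b + a * δ i b)
    (hcomm : ∀ i j a, δ i (δ j a) = δ j (δ i a))
    (d : Fin n → ℕ∞) (x : (Fin n → ℕ) → A) (hx : IsDescent δ d x)
    (x' : (Fin n → ℕ) → A) :
    (IsDescent δ d x' ↔
      (x' 0 = 1 ∧ ∃ l : (Fin n → ℕ) → A, (∀ γ i, δ i (l γ) = 0) ∧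
        ∀ α : Fin n → ℕ, α ≠ 0 → (∀ i, (α i : ℕ∞) ≤ d i) →
          x' α = x α + ∑ β ∈ (Finset.Icc 0 α).erase 0, l β * x (α - β))) ∧
    (IsDescent δ d x' ↔
      (x' 0 = 1 ∧ ∃ m : (Fin n → ℕ) → A, (∀ γ i, δ i (m γ) = 0) ∧
        ∀ α : Fin n → ℕ, α ≠ 0 → (∀ i, (α i : ℕ∞) ≤ d i) →
          x' α = x α + ∑ β ∈ (Finset.Icc 0 α).erase 0, x (α - β) * m β)) := by
  open MulOpposite in
  refine ⟨descent_char_l δ hadd hleib d x hx x', ?_⟩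
  have hadd' : ∀ (i : Fin n) (a b : Aᵐᵒᵖ),
      op (δ i (unop (a + b))) = op (δ i (unop a)) + op (δ i (unop b)) := by
    intro i a b
    rw [unop_add, hadd, op_add]
  have hleib' : ∀ (i : Fin n) (a b : Aᵐᵒᵖ),
      op (δ i (unop (a * b))) = op (δ i (unop a)) * b + a * op (δ i (unop b)) := by
    intro i a b
    rw [unop_mul, hleib, op_add, op_mul, op_mul, op_unop, op_unop, add_comm]
  have hx_op : IsDescent (fun i b => op (δ i (unop b))) d (fun γ => op (x γ)) :=
    (isDescent_op δ d x).mpr hx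
  have key := descent_char_l (fun i b => op (δ i (unop b))) hadd' hleib' d
    (fun γ => op (x γ)) hx_op (fun γ => op (x' γ))
  rw [isDescent_op] at key
  refine key.trans ?_
  constructor
  · rintro ⟨h1, l', hl', hf'⟩
    refine ⟨(op_eq_one_iff _).mp h1, fun γ => unop (l' γ), ?_, ?_⟩
    · intro γ i
      have h2 := hl' γ i
      exact (op_eq_zero_iff _).mp h2
    · intro α hα hαI
      have h := hf' α hα hαI
      apply op_injective
      rw [op_add, op_sum,
        Finset.sum_congr rfl (fun β _ => by rw [op_mul, op_unop] :
          ∀ β ∈ (Finset.Icc 0 α).erase 0,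
            op (x (α - β) * unop (l' β)) = l' β * op (x (α - β)))]
      exact h
  · rintro ⟨h1, m, hm, hf⟩
    refine ⟨by show op (x' 0) = 1; rw [h1, op_one], fun γ => op (m γ), ?_, ?_⟩
    · intro γ i
      show op (δ i (unop (op (m γ)))) = 0
      rw [unop_op, hm γ i, op_zero]
    · intro α hα hαI
      show op (x' α) = op (x α) + ∑ β ∈ (Finset.Icc 0 α).erase 0, op (m β) * op (x (α - β))
      rw [hf α hα hαI, op_add, op_sum]
      congr 1
end

section
/- Let A be a commutative algebra over a field K of characteristic p > 0 and δ a K-derivation of A. Suppose there exist elements y_0, y_1, …, y_{d−1} ∈ A (d ∈ ℕ, d ≥ 1) with y_k^p = 0 and δ^{p^k}(y_k) = 1 for all 0 ≤ k ≤ d−1. Then there exists an iterative δ-descent {x^[i] : 0 ≤ i < p^d} of rank 1 and exponent d with x^[1] = y_0. -/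
open Finset

/-- Prime-power block form of Lucas' theorem. -/
theorem lucas_pow (p : ℕ) [Fact p.Prime] (k n m : ℕ) :
    Nat.choose n m ≡
      Nat.choose (n / p ^ k) (m / p ^ k) * Nat.choose (n % p ^ k) (m % p ^ k) [MOD p] := by
  induction k generalizing n m with
  | zero => simpa [Nat.mod_one] using Nat.ModEq.refl (n.choose m)
  | succ k ih =>
    have h1 : Nat.choose n m ≡ Nat.choose (n % p) (m % p) * Nat.choose (n / p) (m / p) [MOD p] :=
      Choose.choose_modEq_choose_mod_mul_choose_div_nat
    have h2 := ih (n / p) (m / p)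
    have e1 : n % p ^ (k + 1) % p = n % p := Nat.mod_mod_of_dvd _ (dvd_pow_self p k.succ_ne_zero)
    have e2 : m % p ^ (k + 1) % p = m % p := Nat.mod_mod_of_dvd _ (dvd_pow_self p k.succ_ne_zero)
    have e3 : n % p ^ (k + 1) / p = n / p % p ^ k := by
      rw [pow_succ']; exact Nat.mod_mul_right_div_self n p (p ^ k)
    have e4 : m % p ^ (k + 1) / p = m / p % p ^ k := by
      rw [pow_succ']; exact Nat.mod_mul_right_div_self m p (p ^ k)
    have e5 : n / p / p ^ k = n / p ^ (k + 1) := by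
      rw [Nat.div_div_eq_div_mul, ← pow_succ']
    have e6 : m / p / p ^ k = m / p ^ (k + 1) := by
      rw [Nat.div_div_eq_div_mul, ← pow_succ']
    have h3 : Nat.choose (n % p ^ (k + 1)) (m % p ^ (k + 1)) ≡
        Nat.choose (n % p) (m % p) * Nat.choose (n / p % p ^ k) (m / p % p ^ k) [MOD p] := by
      have := Choose.choose_modEq_choose_mod_mul_choose_div_nat
        (p := p) (n := n % p ^ (k + 1)) (k := m % p ^ (k + 1))
      rwa [e1, e2, e3, e4] at this
    calc Nat.choose n m
        ≡ Nat.choose (n % p) (m % p) * Nat.choose (n / p) (m / p) [MOD p] := h1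
      _ ≡ Nat.choose (n % p) (m % p) *
          (Nat.choose (n / p / p ^ k) (m / p / p ^ k) *
            Nat.choose (n / p % p ^ k) (m / p % p ^ k)) [MOD p] := h2.mul_left _
      _ = Nat.choose (n / p ^ (k + 1)) (m / p ^ (k + 1)) *
          (Nat.choose (n % p) (m % p) * Nat.choose (n / p % p ^ k) (m / p % p ^ k)) := by
            rw [e5, e6]; ring
      _ ≡ Nat.choose (n / p ^ (k + 1)) (m / p ^ (k + 1)) *
          Nat.choose (n % p ^ (k + 1)) (m % p ^ (k + 1)) [MOD p] := h3.symm.mul_left _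

/-- The inductive invariant: a truncated iterative `δ`-descent of exponent `k`,
vanishing above `p ^ k`, whose positive members are nilpotent of exponent `p`. -/
def QFam {K A : Type*} [Field K] [CommRing A] [Algebra K A]
    (p : ℕ) (δ : Derivation K A A) (k : ℕ) (x : ℕ → A) : Prop :=
  x 0 = 1 ∧
  (∀ m, p ^ k ≤ m → x m = 0) ∧
  (∀ i j, i < p ^ k → j < p ^ k → x i * x j = ((i + j).choose j : A) * x (i + j)) ∧
  (∀ i, i < p ^ k → δ (x i) = if i = 0 then 0 else x (i - 1)) ∧
  (∀ j, 0 < j → x j ^ p = 0)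

section Step

variable {K A : Type*} [Field K] [CommRing A] [Algebra K A]

theorem QFam.step (p : ℕ) (hp : p.Prime) [CharP K p] [CharP A p] (δ : Derivation K A A)
    (k : ℕ) (x : ℕ → A) (hx : QFam p δ k x) (y : A) (hyp : y ^ p = 0)
    (hyd : (⇑δ)^[p ^ k] y = 1) :
    ∃ X : ℕ → A, QFam p δ (k + 1) X ∧ (0 < k → X 1 = x 1) ∧ (k = 0 → X 1 = y) := by
  obtain ⟨hx0, hxb, hxc, hxd, hxe⟩ := hx
  haveI : Fact p.Prime := ⟨hp⟩
  haveI : ExpChar A p := ExpChar.prime hp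
  set N := p ^ k with hNdef
  have hN : 0 < N := pow_pos hp.pos k
  have hfacne : ∀ m, m < p → ((m.factorial : K)) ≠ 0 := by
    intro m hm
    rw [Ne, CharP.cast_eq_zero_iff K p]
    intro hdvd
    exact absurd ((Nat.Prime.dvd_factorial hp).mp hdvd) (by omega)
  have hcastK : ∀ (n : ℕ) (a : A), (n : A) * a = ((n : K)) • a := by
    intro n a; rw [Algebra.smul_def, map_natCast]
  -- the element z with δ z = x (N - 1) and z ^ p = 0
  set S : A := ∑ j ∈ Finset.range N, ((-1 : K) ^ j) • (x j * (⇑δ)^[j] y) with hS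
  set z : A := ((-1 : K) ^ (N - 1)) • S with hz
  set G : ℕ → A := fun j => if j = 0 then 0 else ((-1 : K) ^ (j - 1)) • (x (j - 1) * (⇑δ)^[j] y)
    with hG
  have hδS : δ S = ((-1 : K) ^ (N - 1)) • (x (N - 1) * (⇑δ)^[N] y) := by
    rw [hS, map_sum]
    have hterm : ∀ j ∈ Finset.range N,
        δ (((-1 : K) ^ j) • (x j * (⇑δ)^[j] y)) = G (j + 1) - G j := by
      intro j hj
      rw [Finset.mem_range] at hj
      rw [Derivation.map_smul, Derivation.leibniz, smul_eq_mul, smul_eq_mul,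
        ← Function.iterate_succ_apply' δ j y, hxd j hj]
      cases j with
      | zero => simp [hG]
      | succ m =>
        simp only [hG, Nat.succ_ne_zero, if_false, Nat.add_sub_cancel, Nat.succ_eq_add_one]
        rw [mul_comm ((⇑δ)^[m + 1] y) (x m), pow_succ]
        module
    rw [Finset.sum_congr rfl hterm, Finset.sum_range_sub G]
    have hNne : N ≠ 0 := hN.ne'
    simp [hG, hNne]
  have hδz : δ z = x (N - 1) := by
    rw [hz, Derivation.map_smul, hδS, smul_smul, ← pow_add, hyd, mul_one,
      Even.neg_one_pow ⟨N - 1, rfl⟩, one_smul]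
  have hzp : z ^ p = 0 := by
    rw [hz, smul_pow, hS, sum_pow_char p]
    have hterm : ∀ j ∈ Finset.range N, (((-1 : K) ^ j) • (x j * (⇑δ)^[j] y)) ^ p = 0 := by
      intro j _
      rw [smul_pow, mul_pow]
      rcases Nat.eq_zero_or_pos j with h0 | h0
      · subst h0; simp [hx0, hyp]
      · rw [hxe j h0, zero_mul, smul_zero]
    rw [Finset.sum_congr rfl hterm, Finset.sum_const_zero, smul_zero]
  -- the new family
  set X : ℕ → A := fun i => (((i / N).factorial : K))⁻¹ • (x (i % N) * z ^ (i / N)) with hXdef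
  have hXval : ∀ i, X i = (((i / N).factorial : K))⁻¹ • (x (i % N) * z ^ (i / N)) := fun _ => rfl
  have hNp : p ^ (k + 1) = N * p := by rw [pow_succ]
  have hXa : X 0 = 1 := by
    rw [hXval, Nat.zero_div, Nat.zero_mod, hx0, pow_zero, mul_one, Nat.factorial_zero,
      Nat.cast_one, inv_one, one_smul]
  have hXb : ∀ m, p ^ (k + 1) ≤ m → X m = 0 := by
    intro m hm
    have hq : p ≤ m / N := by
      rw [Nat.le_div_iff_mul_le hN, mul_comm, ← hNp]; exact hm
    have hzq : z ^ (m / N) = 0 := by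
      have : m / N = p + (m / N - p) := by omega
      rw [this, pow_add, hzp, zero_mul]
    rw [hXval, hzq, mul_zero, smul_zero]
  have hXe : ∀ j, 0 < j → X j ^ p = 0 := by
    intro j hj
    rw [hXval, smul_pow, mul_pow, ← pow_mul, mul_comm (j / N) p, pow_mul, hzp]
    rcases Nat.eq_zero_or_pos (j % N) with hr | hr
    · have hdm := Nat.div_add_mod j N
      have hq : j / N ≠ 0 := by
        intro h; rw [h, mul_zero] at hdm; omega
      rw [zero_pow hq, mul_zero, smul_zero]
    · rw [hxe _ hr, zero_mul, smul_zero]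
  have hXd : ∀ i, i < p ^ (k + 1) → δ (X i) = if i = 0 then 0 else X (i - 1) := by
    intro i hi
    by_cases h0 : i = 0
    · rw [if_pos h0, h0, hXa, Derivation.map_one_eq_zero]
    rw [if_neg h0]
    have hq : i / N < p := by
      rw [Nat.div_lt_iff_lt_mul hN, mul_comm, ← hNp]; exact hi
    have hr : i % N < N := Nat.mod_lt _ hN
    have hdm : N * (i / N) + i % N = i := Nat.div_add_mod i N
    rw [hXval, Derivation.map_smul, Derivation.leibniz, smul_eq_mul, smul_eq_mul,
      Derivation.leibniz_pow, smul_eq_mul, hδz, hxd _ hr]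
    rcases Nat.eq_zero_or_pos (i % N) with hr0 | hr0
    · -- lowest block is zero, borrow
      have hq1 : 1 ≤ i / N := by
        rcases Nat.eq_zero_or_pos (i / N) with h | h
        · exfalso; rw [h, mul_zero] at hdm; omega
        · exact h
      have hqp : (i : ℕ) / N < p := hq
      have e : N * (i / N) = N * (i / N - 1) + N := by
        conv_lhs => rw [show i / N = (i / N - 1) + 1 by omega]
        ring
      have hi1 : i - 1 = N * (i / N - 1) + (N - 1) := by omega
      have hdiv1 : (i - 1) / N = i / N - 1 := by
        rw [hi1, Nat.mul_add_div hN, Nat.div_eq_of_lt (show N - 1 < N by omega), add_zero]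
      have hmod1 : (i - 1) % N = N - 1 := by
        rw [hi1, Nat.mul_add_mod, Nat.mod_eq_of_lt (show N - 1 < N by omega)]
      rw [if_pos hr0, mul_zero, add_zero, hr0, hx0, one_mul, hXval, hdiv1, hmod1]
      rw [← Nat.cast_smul_eq_nsmul K, smul_smul]
      have hsc : ((((i / N)).factorial : K))⁻¹ * ((i / N : ℕ) : K)
          = ((((i / N - 1)).factorial : K))⁻¹ := by
        have hfq : ((i / N).factorial : ℕ) = (i / N) * (i / N - 1).factorial :=
          (Nat.mul_factorial_pred (by omega)).symm
        have hqne : ((i / N : ℕ) : K) ≠ 0 := by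
          rw [Ne, CharP.cast_eq_zero_iff K p]
          intro hdvd
          have := Nat.le_of_dvd (by omega) hdvd
          omega
        field_simp [hfacne _ hq, hfacne _ (lt_of_le_of_lt (Nat.sub_le _ _) hq)]
        rw [hfq]; push_cast; ring
      rw [hsc, mul_comm (z ^ (i / N - 1)) (x (N - 1))]
    · -- lowest block positive
      have hrne : i % N ≠ 0 := hr0.ne'
      rw [if_neg hrne]
      have hcol : x (i % N) * ((i / N) • (z ^ (i / N - 1) * x (N - 1))) = 0 := by
        rw [mul_smul_comm]
        have hre : x (i % N) * (z ^ (i / N - 1) * x (N - 1)) =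
            (x (i % N) * x (N - 1)) * z ^ (i / N - 1) := by ring
        rw [hre, hxc _ _ hr (by omega), hxb (i % N + (N - 1)) (by omega), mul_zero, zero_mul,
          smul_zero]
      have hi1 : i - 1 = N * (i / N) + (i % N - 1) := by omega
      have hdiv1 : (i - 1) / N = i / N := by
        rw [hi1, Nat.mul_add_div hN, Nat.div_eq_of_lt (show i % N - 1 < N by omega), add_zero]
      have hmod1 : (i - 1) % N = i % N - 1 := by
        rw [hi1, Nat.mul_add_mod, Nat.mod_eq_of_lt (show i % N - 1 < N by omega)]
      rw [hcol, zero_add, hXval, hdiv1, hmod1, mul_comm (z ^ (i / N)) (x (i % N - 1))]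
  have hXc : ∀ i j, i < p ^ (k + 1) → j < p ^ (k + 1) →
      X i * X j = ((i + j).choose j : A) * X (i + j) := by
    intro i j hi hj
    have hq1 : i / N < p := by rw [Nat.div_lt_iff_lt_mul hN, mul_comm, ← hNp]; exact hi
    have hq2 : j / N < p := by rw [Nat.div_lt_iff_lt_mul hN, mul_comm, ← hNp]; exact hj
    have hr1 : i % N < N := Nat.mod_lt _ hN
    have hr2 : j % N < N := Nat.mod_lt _ hN
    have hdmi : N * (i / N) + i % N = i := Nat.div_add_mod i N
    have hdmj : N * (j / N) + j % N = j := Nat.div_add_mod j N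
    rw [hXval i, hXval j, smul_mul_smul_comm, mul_mul_mul_comm, ← pow_add, hxc _ _ hr1 hr2]
    by_cases hqq : p ≤ i / N + j / N
    · have hzq : z ^ (i / N + j / N) = 0 := by
        have : i / N + j / N = p + (i / N + j / N - p) := by omega
        rw [this, pow_add, hzp, zero_mul]
      have e : N * (i / N + j / N) = N * (i / N) + N * (j / N) := by ring
      have e2 : N * p ≤ N * (i / N + j / N) := Nat.mul_le_mul_left N hqq
      have hij : p ^ (k + 1) ≤ i + j := by rw [hNp]; omega
      rw [hXb _ hij, mul_zero, hzq, mul_zero, smul_zero]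
    · push_neg at hqq
      have e : N * (i / N + j / N) = N * (i / N) + N * (j / N) := by ring
      by_cases hrr : i % N + j % N < N
      · -- no carry between blocks
        have hijeq : i + j = N * (i / N + j / N) + (i % N + j % N) := by omega
        have hdiv : (i + j) / N = i / N + j / N := by
          rw [hijeq, Nat.mul_add_div hN, Nat.div_eq_of_lt hrr, add_zero]
        have hmod : (i + j) % N = i % N + j % N := by
          rw [hijeq, Nat.mul_add_mod, Nat.mod_eq_of_lt hrr]
        have hL := lucas_pow p k (i + j) j
        rw [← hNdef, hdiv, hmod] at hL
        have hLK : (((i + j).choose j : ℕ) : K) =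
            (((i / N + j / N).choose (j / N) * ((i % N + j % N).choose (j % N)) : ℕ) : K) :=
          (CharP.natCast_eq_natCast K p).mpr hL
        have hfact := Nat.choose_mul_factorial_mul_factorial (Nat.le_add_left (j / N) (i / N))
        rw [Nat.add_sub_cancel] at hfact
        have hfactK : (((i / N + j / N).choose (j / N) : ℕ) : K) * ((j / N).factorial : K)
            * ((i / N).factorial : K) = (((i / N + j / N).factorial : ℕ) : K) := by
          exact_mod_cast congrArg (Nat.cast : ℕ → K) hfact
        have hsc : (((i / N).factorial : K))⁻¹ * (((j / N).factorial : K))⁻¹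
              * (((i % N + j % N).choose (j % N) : ℕ) : K)
            = (((i + j).choose j : ℕ) : K) * (((i / N + j / N).factorial : K))⁻¹ := by
          have ha := hfacne (i / N) hq1
          have hb := hfacne (j / N) hq2
          have hc := hfacne (i / N + j / N) hqq
          rw [hLK]; push_cast
          field_simp
          linear_combination (-(((i % N + j % N).choose (j % N) : ℕ) : K)) * hfactK
        rw [hXval (i + j), hdiv, hmod, mul_assoc, hcastK, smul_smul, hcastK, smul_smul, hsc]
      · -- carry between blocks: binomial coefficient vanishes mod p
        push_neg at hrr
        rw [hxb (i % N + j % N) (by omega), mul_zero, zero_mul, smul_zero]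
        have e3 : N * (i / N + j / N + 1) = N * (i / N) + N * (j / N) + N := by ring
        have hijeq : i + j = N * (i / N + j / N + 1) + (i % N + j % N - N) := by omega
        have hmod : (i + j) % N = i % N + j % N - N := by
          rw [hijeq, Nat.mul_add_mod, Nat.mod_eq_of_lt (show i % N + j % N - N < N by omega)]
        have hL := lucas_pow p k (i + j) j
        rw [← hNdef, hmod] at hL
        rw [Nat.choose_eq_zero_of_lt (show i % N + j % N - N < j % N by omega), mul_zero] at hL
        have hc0 : (((i + j).choose j : ℕ) : A) = 0 := by
          rw [CharP.cast_eq_zero_iff A p]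
          exact (Nat.modEq_zero_iff_dvd).mp hL
        rw [hc0, zero_mul]
  refine ⟨X, ⟨hXa, hXb, hXc, hXd, hXe⟩, ?_, ?_⟩
  · intro hk
    have hN1 : 1 < N := Nat.one_lt_pow (by omega) hp.one_lt
    rw [hXval, Nat.div_eq_of_lt hN1, Nat.mod_eq_of_lt hN1, pow_zero, mul_one,
      Nat.factorial_zero, Nat.cast_one, inv_one, one_smul]
  · intro hk
    have hN1 : N = 1 := by rw [hNdef, hk, pow_zero]
    rw [hXval, hN1, Nat.div_one, Nat.mod_one, hx0, pow_one, one_mul, Nat.factorial_one,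
      Nat.cast_one, inv_one, one_smul, hz, hS, hN1, Finset.sum_range_one,
      Function.iterate_zero_apply, hx0, one_mul]
    norm_num

theorem exists_QFam (p : ℕ) (hp : p.Prime) [CharP K p] [CharP A p] (δ : Derivation K A A)
    (y : ℕ → A) (d : ℕ) (hy : ∀ l, l < d → y l ^ p = 0 ∧ (⇑δ)^[p ^ l] (y l) = 1) :
    ∃ x : ℕ → A, QFam p δ d x ∧ (0 < d → x 1 = y 0) := by
  induction d with
  | zero =>
    refine ⟨fun i => if i = 0 then 1 else 0, ⟨rfl, ?_, ?_, ?_, ?_⟩, by omega⟩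
    · intro m hm
      rw [pow_zero] at hm
      have hm' : m ≠ 0 := by omega
      simp [hm']
    · intro i j hi hj
      rw [pow_zero] at hi hj
      interval_cases i <;> interval_cases j <;> simp
    · intro i hi
      rw [pow_zero] at hi
      interval_cases i
      simp
    · intro j hj
      have hj' : j ≠ 0 := by omega
      simp [hj', zero_pow hp.pos.ne']
  | succ d ih =>
    obtain ⟨x, hx, hx1⟩ := ih fun l hl => hy l (by omega)
    obtain ⟨X, hX, hX1, hX0⟩ :=
      QFam.step p hp δ d x hx (y d) (hy d (by omega)).1 (hy d (by omega)).2
    refine ⟨X, hX, fun _ => ?_⟩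
    rcases Nat.eq_zero_or_pos d with h | h
    · rw [hX0 h, h]
    · rw [hX1 h, hx1 h]

theorem QFam.iterate (p : ℕ) (δ : Derivation K A A) (d : ℕ) (x : ℕ → A)
    (hxb : ∀ m, p ^ d ≤ m → x m = 0)
    (hxd : ∀ i, i < p ^ d → δ (x i) = if i = 0 then 0 else x (i - 1)) :
    ∀ m i, i < p ^ d → (⇑δ)^[m] (x i) = if m ≤ i then x (i - m) else 0 := by
  intro m
  induction m with
  | zero => intro i _; simp
  | succ m ih =>
    intro i hi
    rw [Function.iterate_succ_apply', ih i hi]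
    by_cases hmi : m ≤ i
    · rw [if_pos hmi, hxd (i - m) (lt_of_le_of_lt (Nat.sub_le i m) hi)]
      by_cases hmi1 : m + 1 ≤ i
      · rw [if_neg (show ¬ i - m = 0 by omega), if_pos hmi1,
          show i - m - 1 = i - (m + 1) from by omega]
      · simp [show i - m = 0 from by omega, show ¬ (m + 1 ≤ i) from by omega]
    · rw [if_neg hmi, map_zero, if_neg (show ¬ (m + 1 ≤ i) by omega)]

end Step

/-- A family `x : ℕ → A` (thought of as `{x^[i] : 0 ≤ i < p^d}`) is an iterative
`δ`-descent of rank 1 and exponent `d`: `x 0 = 1`,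
`x^[i] x^[j] = binom(i+j,j) x^[i+j]` (the binomial coefficient taken in `A`, i.e. mod `p`)
for `i + j < p^d`, and `δ^k(x^[i]) = x^[i-k]` for all `k` and `i < p^d`
(with `x^[m] := 0` for `m < 0`). -/
def IsIterativeDescentRankOne {K A : Type*} [CommRing K] [CommRing A] [Algebra K A]
    (p : ℕ) (δ : Derivation K A A) (d : ℕ) (x : ℕ → A) : Prop :=
  x 0 = 1 ∧
  (∀ i j : ℕ, i + j < p ^ d → x i * x j = ((i + j).choose j : A) * x (i + j)) ∧
  (∀ k i : ℕ, i < p ^ d → (⇑δ)^[k] (x i) = if k ≤ i then x (i - k) else 0)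

/-- **Theorem (existence of an iterative δ-descent of rank 1).**
Let `A` be a commutative algebra over a field `K` of characteristic `p > 0` and `δ` a
`K`-derivation of `A`.  Suppose there are elements `y_0, …, y_{d-1} ∈ A` (`d ≥ 1`) with
`y_k^p = 0` and `δ^{p^k}(y_k) = 1` for `0 ≤ k ≤ d-1`.  Then there exists an iterative
`δ`-descent `{x^[i] : 0 ≤ i < p^d}` of rank 1 and exponent `d` with `x^[1] = y_0`. -/
theorem iterative_descent_rank_one_exists
    {K A : Type*} [Field K] [CommRing A] [Algebra K A]
    (p : ℕ) (hp : p.Prime) [CharP K p]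
    (δ : Derivation K A A) (d : ℕ) (hd : 1 ≤ d) (y : ℕ → A)
    (hy : ∀ k, k ≤ d - 1 → y k ^ p = 0 ∧ (⇑δ)^[p ^ k] (y k) = 1) :
    ∃ x : ℕ → A, IsIterativeDescentRankOne p δ d x ∧ x 1 = y 0 := by
  rcases subsingleton_or_nontrivial A with hA | hA
  · exact ⟨fun _ => 1,
      ⟨Subsingleton.elim _ _, fun i j _ => Subsingleton.elim _ _,
        fun k i _ => Subsingleton.elim _ _⟩, Subsingleton.elim _ _⟩
  · haveI := charP_of_injective_algebraMap' (A := A) K p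
    obtain ⟨x, hx, hx1⟩ := exists_QFam p hp δ y d fun l hl => hy l (by omega)
    obtain ⟨ha, hb, hc, hd', he⟩ := hx
    exact ⟨x, ⟨ha, fun i j hij => hc i j (by omega) (by omega),
      fun m i hi => QFam.iterate p δ d x hb hd' m i hi⟩, hx1 (by omega)⟩
end

section
/- (Rigidity of Aut_K(D(P_n))) Let K be a field of characteristic p > 0 and let σ, τ be K-algebra automorphisms of D(P_n). Then σ = τ if and only if σ(x_1) = τ(x_1), …, σ(x_n) = τ(x_n) (where x_i denotes the multiplication operator by x_i). -/
open MvPolynomial AddMonoidAlgebra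

variable (K : Type*) [Field K] (n : ℕ)

/-- The higher (Hasse) derivative `∂^[α]` on `P_n = K[x_1,…,x_n]`: the `K`-linear
endomorphism sending the monomial `x^β` to `(∏ i, binom(β_i, α_i)) x^{β-α}`
(which is `0` unless `β ≥ α` componentwise). -/
noncomputable def hasse (α : Fin n →₀ ℕ) : Module.End K (MvPolynomial (Fin n) K) :=
  (basisMonomials (Fin n) K).constr K fun β : Fin n →₀ ℕ =>
    (∏ i, (β i).choose (α i)) • monomial (β - α) (1 : K)

/-- The multiplication operator `g ↦ f g` on `P_n`. -/
noncomputable def mulOp (f : MvPolynomial (Fin n) K) :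
    Module.End K (MvPolynomial (Fin n) K) :=
  LinearMap.mulLeft K f

/-- The ring `D(P_n)` of differential operators on `P_n`: the `K`-subalgebra of
`End_K(P_n)` generated by the multiplication operators `x_1,…,x_n` and the higher
derivatives `∂^[α]` (each `∂^[α]` is a product of the generators `∂_i^[k]`). -/
noncomputable def DiffOps : Subalgebra K (Module.End K (MvPolynomial (Fin n) K)) :=
  Algebra.adjoin K
    (Set.range (fun i : Fin n => mulOp K n (X i)) ∪ Set.range (hasse K n))

/-- The multiplication operator by `X i`, as an element of `D(P_n)`. -/
noncomputable def xOp (i : Fin n) : DiffOps K n :=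
  ⟨mulOp K n (X i), Algebra.subset_adjoin (Set.mem_union_left _ ⟨i, rfl⟩)⟩

/-- `∂^[α]`, as an element of `D(P_n)`. -/
noncomputable def hasseOp (α : Fin n →₀ ℕ) : DiffOps K n :=
  ⟨hasse K n α, Algebra.subset_adjoin (Set.mem_union_right _ ⟨α, rfl⟩)⟩

/-- Every multiplication operator belongs to `D(P_n)`. -/
theorem mulOp_mem (f : MvPolynomial (Fin n) K) : mulOp K n f ∈ DiffOps K n := by
  have h : Algebra.adjoin K (Set.range (X : Fin n → MvPolynomial (Fin n) K)) ≤
      Subalgebra.comap (Algebra.lmul K (MvPolynomial (Fin n) K)) (DiffOps K n) := by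
    rw [Algebra.adjoin_le_iff]
    rintro _ ⟨i, rfl⟩
    show Algebra.lmul K (MvPolynomial (Fin n) K) (X i) ∈ DiffOps K n
    have : Algebra.lmul K (MvPolynomial (Fin n) K) (X i) = mulOp K n (X i) := by
      ext g
      simp [mulOp, Algebra.lmul, LinearMap.mulLeft_apply]
    rw [this]
    exact (xOp K n i).2
  have hf : f ∈ Algebra.adjoin K (Set.range (X : Fin n → MvPolynomial (Fin n) K)) := by
    rw [MvPolynomial.adjoin_range_X]; trivial
  have := h hf
  rw [Subalgebra.mem_comap] at this
  have he : Algebra.lmul K (MvPolynomial (Fin n) K) f = mulOp K n f := by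
    ext g
    simp [mulOp, Algebra.lmul, LinearMap.mulLeft_apply]
  rwa [he] at this

/-- The multiplication operator by `f`, as an element of `D(P_n)`. -/
noncomputable def mOp (f : MvPolynomial (Fin n) K) : DiffOps K n :=
  ⟨mulOp K n f, mulOp_mem K n f⟩

section AuxiliaryLemmas

variable {K n}

lemma hasse_monomial_one (α β : Fin n →₀ ℕ) :
    hasse K n α (monomial β (1:K)) = (∏ i, (β i).choose (α i)) • monomial (β - α) (1 : K) := by
  have h : monomial β (1:K) = basisMonomials (Fin n) K β := by rw [coe_basisMonomials]
  rw [h, hasse, Module.Basis.constr_basis]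

lemma End_ext {f g : Module.End K (MvPolynomial (Fin n) K)}
    (h : ∀ β : Fin n →₀ ℕ, f (monomial β 1) = g (monomial β 1)) : f = g := by
  apply (basisMonomials (Fin n) K).ext
  intro β
  simpa [coe_basisMonomials] using h β

lemma hasse_monomial (α β : Fin n →₀ ℕ) (c : K) :
    hasse K n α (monomial β c) = (∏ i, (β i).choose (α i)) • monomial (β - α) c := by
  have h : monomial β c = c • monomial β (1:K) := by rw [smul_monomial, smul_eq_mul, mul_one]
  rw [h, map_smul, hasse_monomial_one, smul_comm, smul_monomial, smul_eq_mul, mul_one]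

lemma hasse_zero' : hasse K n (0 : Fin n →₀ ℕ) = 1 := by
  apply End_ext
  intro β
  simp [hasse_monomial_one]

lemma choose_aux (m a b : ℕ) :
    m.choose b * (m - b).choose a = (a + b).choose a * m.choose (a + b) := by
  by_cases h1 : a + b ≤ m
  · have hb : b ≤ m := le_trans (Nat.le_add_left b a) h1
    have ha : a ≤ m - b := by omega
    apply Nat.eq_of_mul_eq_mul_right (Nat.factorial_pos a)
    apply Nat.eq_of_mul_eq_mul_right (Nat.factorial_pos b)
    apply Nat.eq_of_mul_eq_mul_right (Nat.factorial_pos (m - (a+b)))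
    have e1 : (m - b) - a = m - (a + b) := by omega
    calc m.choose b * (m - b).choose a * Nat.factorial a * Nat.factorial b * Nat.factorial (m - (a+b))
        = (m.choose b * Nat.factorial b * Nat.factorial (m-b)) * 1 := by
          rw [← e1, ← Nat.choose_mul_factorial_mul_factorial ha]; ring
      _ = Nat.factorial m := by rw [Nat.choose_mul_factorial_mul_factorial hb]; ring
      _ = (m.choose (a+b) * Nat.factorial (a+b) * Nat.factorial (m - (a+b))) := by
          rw [Nat.choose_mul_factorial_mul_factorial h1]
      _ = (a+b).choose a * m.choose (a+b) * Nat.factorial a * Nat.factorial b * Nat.factorial (m - (a+b)) := by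
          rw [← Nat.choose_mul_factorial_mul_factorial (Nat.le_add_right a b)]
          have : a + b - a = b := by omega
          rw [this]; ring
  · push_neg at h1
    rw [Nat.choose_eq_zero_of_lt h1, mul_zero]
    by_cases hb : b ≤ m
    · have : m - b < a := by omega
      rw [Nat.choose_eq_zero_of_lt this, mul_zero]
    · push_neg at hb
      rw [Nat.choose_eq_zero_of_lt hb, zero_mul]


lemma hasse_mul (α β : Fin n →₀ ℕ) :
    hasse K n α * hasse K n β
      = (∏ i, ((α + β) i).choose (α i)) • hasse K n (α + β) := by
  apply End_ext
  intro γ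
  rw [Module.End.mul_apply, hasse_monomial_one, map_nsmul, hasse_monomial_one,
    LinearMap.smul_apply, hasse_monomial_one, smul_smul, smul_smul]
  have hexp : γ - β - α = γ - (α + β) := by rw [tsub_tsub, add_comm]
  rw [hexp]
  congr 1
  simp only [Finsupp.tsub_apply, Finsupp.add_apply]
  rw [← Finset.prod_mul_distrib, ← Finset.prod_mul_distrib]
  exact Finset.prod_congr rfl fun i _ => choose_aux (γ i) (α i) (β i)

lemma prod_single_choose (γ : Fin n →₀ ℕ) (i : Fin n) (k : ℕ) :
    (∏ m, (γ m).choose ((Finsupp.single i k) m)) = (γ i).choose k := by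
  rw [Finset.prod_eq_single i]
  · rw [Finsupp.single_eq_same]
  · intro m _ hmi
    rw [Finsupp.single_apply, if_neg (fun h => hmi h.symm), Nat.choose_zero_right]
  · intro h; exact absurd (Finset.mem_univ i) h

lemma hasse_single_mul (i : Fin n) (a b : ℕ) :
    hasse K n (Finsupp.single i a) * hasse K n (Finsupp.single i b)
      = ((a + b).choose a) • hasse K n (Finsupp.single i (a + b)) := by
  rw [hasse_mul, ← Finsupp.single_add]
  congr 1
  rw [prod_single_choose, Finsupp.single_eq_same]

lemma hasse_single_pow (i : Fin n) (k j : ℕ) :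
    hasse K n (Finsupp.single i k) ^ j
      = (∏ l ∈ Finset.range j, (((l+1)*k).choose k)) • hasse K n (Finsupp.single i (j*k)) := by
  induction j with
  | zero => simp [Finsupp.single_zero, hasse_zero']
  | succ j ih =>
    rw [pow_succ', ih, mul_smul_comm, hasse_single_mul, Finset.prod_range_succ, smul_smul]
    have h1 : k + j * k = (j+1) * k := by ring
    rw [h1]

lemma prime_dvd_choose_mul_self (p : ℕ) [hp : Fact p.Prime] :
    ∀ k, k ≠ 0 → p ∣ (p * k).choose k := by
  intro k
  induction k using Nat.strong_induction_on with
  | _ k ih =>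
    intro hk
    have hppos : 0 < p := hp.out.pos
    have h := Choose.choose_modEq_choose_mod_mul_choose_div_nat (p := p) (n := p*k) (k := k)
    rw [Nat.mul_mod_right, Nat.mul_div_cancel_left _ hppos] at h
    rw [← Nat.modEq_zero_iff_dvd]
    by_cases hr : k % p = 0
    · have hq : k / p < k := Nat.div_lt_self (Nat.pos_of_ne_zero hk) hp.out.one_lt
      have e := Nat.div_add_mod k p
      have hq0 : k / p ≠ 0 := by
        intro h0
        rw [h0, mul_zero] at e
        omega
      have hkk : p * (k / p) = k := by omega
      have := ih (k / p) hq hq0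
      rw [hkk] at this
      refine h.trans ?_
      rw [hr, Nat.choose_zero_right, one_mul]
      exact Nat.modEq_zero_iff_dvd.mpr this
    · refine h.trans ?_
      rw [Nat.choose_eq_zero_of_lt (Nat.pos_of_ne_zero hr), zero_mul]


lemma hasse_single_pow_char' (p : ℕ) [hp : Fact p.Prime] [CharP K p] (i : Fin n) (k : ℕ)
    (hk : k ≠ 0) : hasse K n (Finsupp.single i k) ^ p = 0 := by
  rw [hasse_single_pow]
  have hdvd : p ∣ ∏ l ∈ Finset.range p, (((l+1)*k).choose k) := by
    have hmem : p - 1 ∈ Finset.range p := by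
      have := hp.out.pos
      simp only [Finset.mem_range]
      omega
    refine dvd_trans ?_ (Finset.dvd_prod_of_mem _ hmem)
    have hpe : (p - 1 + 1) * k = p * k := by
      have := hp.out.pos
      congr 1
      omega
    rw [hpe]
    exact prime_dvd_choose_mul_self p k hk
  have hcast : ((∏ l ∈ Finset.range p, (((l+1)*k).choose k) : ℕ) : K) = 0 :=
    (CharP.cast_eq_zero_iff K p _).mpr hdvd
  rw [← Nat.cast_smul_eq_nsmul K, hcast, zero_smul]

lemma mulOp_apply (f g : MvPolynomial (Fin n) K) : mulOp K n f g = f * g := rfl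

lemma mulOp_X_monomial (j : Fin n) (β : Fin n →₀ ℕ) :
    mulOp K n (X j) (monomial β (1:K)) = monomial (Finsupp.single j 1 + β) (1:K) := by
  rw [mulOp_apply, X, monomial_mul, one_mul]

-- commutation with X j, j ≠ i
lemma hasse_single_comm_X (i j : Fin n) (k : ℕ) (hji : j ≠ i) :
    hasse K n (Finsupp.single i k) * mulOp K n (X j)
      = mulOp K n (X j) * hasse K n (Finsupp.single i k) := by
  apply End_ext
  intro β
  have hexp : Finsupp.single j 1 + β - Finsupp.single i k
      = Finsupp.single j 1 + (β - Finsupp.single i k) := by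
    ext m
    simp only [Finsupp.tsub_apply, Finsupp.add_apply, Finsupp.single_apply]
    by_cases h1 : i = m <;> by_cases h2 : j = m
    · exact absurd (h2.trans h1.symm) hji
    · simp only [if_pos h1, if_neg h2]; omega
    · simp only [if_neg h1, if_pos h2]; omega
    · simp only [if_neg h1, if_neg h2]; omega
  rw [Module.End.mul_apply, Module.End.mul_apply, mulOp_X_monomial, hasse_monomial_one,
    hasse_monomial_one, map_nsmul, mulOp_X_monomial, hexp]
  congr 1
  rw [prod_single_choose, prod_single_choose, Finsupp.add_apply,
    Finsupp.single_apply, if_neg hji, zero_add]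

lemma hasse_single_comm_X_self (i : Fin n) (k : ℕ) :
    hasse K n (Finsupp.single i (k+1)) * mulOp K n (X i)
      = mulOp K n (X i) * hasse K n (Finsupp.single i (k+1)) + hasse K n (Finsupp.single i k) := by
  apply End_ext
  intro β
  rw [Module.End.mul_apply, LinearMap.add_apply, Module.End.mul_apply, mulOp_X_monomial,
    hasse_monomial_one, hasse_monomial_one, hasse_monomial_one, map_nsmul, mulOp_X_monomial,
    prod_single_choose, prod_single_choose, prod_single_choose]
  rw [Finsupp.add_apply, Finsupp.single_eq_same]
  rcases Nat.lt_or_ge (β i) k with hlt | hge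
  · rw [Nat.choose_eq_zero_of_lt (by omega), Nat.choose_eq_zero_of_lt (by omega),
      Nat.choose_eq_zero_of_lt (by omega)]
    simp
  · rcases Nat.eq_or_lt_of_le hge with heq | hgt
    · have hb : β i = k := heq.symm
      rw [hb, show 1 + k = k + 1 from Nat.add_comm 1 k, Nat.choose_self,
        Nat.choose_succ_self, Nat.choose_self]
      have hexp : Finsupp.single i 1 + β - Finsupp.single i (k + 1) = β - Finsupp.single i k := by
        ext m
        simp only [Finsupp.tsub_apply, Finsupp.add_apply, Finsupp.single_apply]
        split_ifs with h
        · subst h; omega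
        · omega
      rw [hexp]
      simp
    · -- β i ≥ k+1
      have hexp1 : Finsupp.single i 1 + β - Finsupp.single i (k + 1) = β - Finsupp.single i k := by
        ext m
        simp only [Finsupp.tsub_apply, Finsupp.add_apply, Finsupp.single_apply]
        split_ifs with h
        · subst h; omega
        · omega
      have hexp2 : Finsupp.single i 1 + (β - Finsupp.single i (k + 1)) = β - Finsupp.single i k := by
        ext m
        simp only [Finsupp.tsub_apply, Finsupp.add_apply, Finsupp.single_apply]
        split_ifs with h
        · subst h; omega
        · omega
      rw [hexp1, hexp2, ← add_smul]
      congr 1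
      rw [show 1 + β i = β i + 1 from Nat.add_comm 1 (β i), Nat.choose_succ_succ (β i) k]
      simp only [Nat.succ_eq_add_one]
      omega

lemma eq_mulOp_of_commute (v : Module.End K (MvPolynomial (Fin n) K))
    (h : ∀ i, v * mulOp K n (X i) = mulOp K n (X i) * v) :
    v = mulOp K n (v 1) := by
  have key : ∀ f : MvPolynomial (Fin n) K, v * mulOp K n f = mulOp K n f * v := by
    intro f
    induction f using MvPolynomial.induction_on with
    | C a =>
      refine LinearMap.ext fun g => ?_
      simp only [Module.End.mul_apply, mulOp_apply]
      rw [C_mul', C_mul', map_smul]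
    | add f g hf hg =>
      have hadd : mulOp K n (f + g) = mulOp K n f + mulOp K n g := by
        refine LinearMap.ext fun h => ?_
        simp [mulOp_apply, add_mul]
      rw [hadd, mul_add, add_mul, hf, hg]
    | mul_X f i hf =>
      have hmul : mulOp K n (f * X i) = mulOp K n f * mulOp K n (X i) := by
        refine LinearMap.ext fun h => ?_
        simp [mulOp_apply, mul_assoc]
      rw [hmul, ← mul_assoc, hf, mul_assoc, h i, ← mul_assoc]
  refine LinearMap.ext fun f => ?_
  have h2 := congrArg (fun w => w 1) (key f)
  simp only [Module.End.mul_apply, mulOp_apply, mul_one] at h2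
  rw [mulOp_apply, h2, mul_comm]


lemma supDegree_hasse_le (α : Fin n →₀ ℕ) (f : MvPolynomial (Fin n) K) :
    (hasse K n α f).supDegree toLex ≤ f.supDegree toLex := by
  conv_lhs => rw [f.as_sum]
  rw [map_sum]
  refine AddMonoidAlgebra.supDegree_sum_le.trans ?_
  refine Finset.sup_le fun β hβ => ?_
  rw [hasse_monomial]
  have h1 : ((∏ i, (β i).choose (α i)) • monomial (β - α) (coeff β f) : MvPolynomial (Fin n) K)
      = monomial (β - α) ((∏ i, (β i).choose (α i) : ℕ) • coeff β f) := by
    rw [smul_monomial]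
  rw [h1, ← single_eq_monomial]
  refine (AddMonoidAlgebra.supDegree_single _ _).trans_le ?_
  split_ifs with h
  · exact bot_le
  · exact (Finsupp.toLex_monotone tsub_le_self).trans (Finset.le_sup hβ)

lemma mulOp_C (c : K) : mulOp K n (C c) = algebraMap K (Module.End K (MvPolynomial (Fin n) K)) c := by
  refine LinearMap.ext fun g => ?_
  show C c * g = c • g
  exact C_mul'

lemma supDegree_neg' (f : MvPolynomial (Fin n) K) :
    (-f).supDegree toLex = f.supDegree toLex := by
  unfold AddMonoidAlgebra.supDegree
  rw [AddMonoidAlgebra.coeff_neg, Finsupp.support_neg]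

lemma key_lemma (p : ℕ) [Fact p.Prime] [CharP K p] (i : Fin n) (k : ℕ)
    (htp : hasse K n (Finsupp.single i k) ^ p = 0)
    (g : MvPolynomial (Fin n) K)
    (hpow : (hasse K n (Finsupp.single i k) + mulOp K n g) ^ p = 0) : g = 0 := by
  by_contra hg
  set t := hasse K n (Finsupp.single i k) with ht
  rcases eq_or_lt_of_le (bot_le : (⊥ : Lex (Fin n →₀ ℕ)) ≤ g.supDegree toLex) with hdeg | hdeg
  · -- constant case
    have hsupp : ∀ β ∈ g.support, β = (0 : Fin n →₀ ℕ) := by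
      intro β hβ
      have hle : toLex β ≤ g.supDegree toLex := Finset.le_sup hβ
      rw [← hdeg] at hle
      exact toLex.injective (le_antisymm hle bot_le)
    have hgC : g = C (coeff 0 g) := by
      ext m
      by_cases hm : m = 0
      · subst hm; simp
      · rw [coeff_C, if_neg (fun h => hm h.symm)]
        by_contra hne
        exact hm (hsupp m (mem_support_iff.mpr hne))
    have hc : coeff 0 g ≠ 0 := fun h => hg (by rw [hgC, h, map_zero])
    set c := coeff 0 g with hcdef
    haveI hE : CharP (Module.End K (MvPolynomial (Fin n) K)) p := by
      haveI : Nontrivial (Module.End K (MvPolynomial (Fin n) K)) := by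
        refine ⟨1, 0, fun h => ?_⟩
        have h1 := congrArg (fun w => w (1 : MvPolynomial (Fin n) K)) h
        simp at h1
      exact charP_of_injective_algebraMap (algebraMap K _).injective p
    have hcomm : Commute t (algebraMap K (Module.End K (MvPolynomial (Fin n) K)) c) :=
      (Algebra.commutes c t).symm
    rw [hgC, mulOp_C, add_pow_char_of_commute _ hcomm, htp, zero_add, ← map_pow] at hpow
    
    have h1 := congrArg (fun w => w (1 : MvPolynomial (Fin n) K)) hpow
    have h2 : c ^ p • (1 : MvPolynomial (Fin n) K) = 0 := by
      exact h1
    rw [smul_eq_zero] at h2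
    rcases h2 with h2 | h2
    · exact hc (pow_eq_zero_iff (Fact.out (p := p.Prime)).pos.ne' |>.mp h2)
    · exact one_ne_zero h2
  · -- nonconstant case
    have hD : Function.Injective (toLex : (Fin n →₀ ℕ) → Lex (Fin n →₀ ℕ)) := toLex.injective
    have hadd : ∀ a b : Fin n →₀ ℕ, toLex (a + b) = toLex a + toLex b := fun _ _ => rfl
    have hdeg0 : (0 : Lex (Fin n →₀ ℕ)) < g.supDegree toLex := hdeg
    set G := mulOp K n g with hG
    have hstep : ∀ h : MvPolynomial (Fin n) K, h ≠ 0 →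
        (t + G) h ≠ 0 ∧
          ((t + G) h).supDegree toLex = g.supDegree toLex + h.supDegree toLex := by
      intro h hh
      have happ963 : (t + G) h = t h + g * h := by
        rw [LinearMap.add_apply]; rfl
      have hth : (t h).supDegree toLex ≤ h.supDegree toLex := supDegree_hasse_le _ _
      have hlc : g.leadingCoeff toLex * h.leadingCoeff toLex ≠ 0 :=
        mul_ne_zero (fun h0 => hg ((AddMonoidAlgebra.leadingCoeff_eq_zero hD).mp h0))
          (fun h0 => hh ((AddMonoidAlgebra.leadingCoeff_eq_zero hD).mp h0))
      have hgh : (g * h).supDegree toLex = g.supDegree toLex + h.supDegree toLex :=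
        AddMonoidAlgebra.supDegree_mul hD hadd hlc hg hh
      have hlt : (t h).supDegree toLex < (g * h).supDegree toLex := by
        rw [hgh]
        exact hth.trans_lt (lt_add_of_pos_left _ hdeg0)
      constructor
      · rw [happ963]
        intro h0
        have hBA : (g * h).supDegree toLex = (t h).supDegree toLex := by
          have hneg : g * h = -(t h) := by
            rw [eq_neg_iff_add_eq_zero, add_comm]
            exact h0
          rw [hneg, supDegree_neg']
        exact absurd hBA hlt.ne'
      · rw [happ963, AddMonoidAlgebra.supDegree_add_eq_right hlt, hgh]
    have hiter : ∀ j : ℕ, ((t + G) ^ j) 1 ≠ 0 := by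
      have main : ∀ j : ℕ, ((t + G) ^ j) 1 ≠ 0 ∧
          (((t + G) ^ j) 1).supDegree toLex = j • (g.supDegree toLex) := by
        intro j
        induction j with
        | zero =>
          refine ⟨by simp, ?_⟩
          rw [pow_zero, zero_smul]
          show (LinearMap.id (R := K) (1 : MvPolynomial (Fin n) K)).supDegree toLex = 0
          rw [LinearMap.id_apply, ← C_1, supDegree_toLex_C]
        | succ j ih =>
          obtain ⟨h1, h2⟩ := ih
          rw [pow_succ', Module.End.mul_apply]
          obtain ⟨hne, hdeg2⟩ := hstep _ h1
          refine ⟨hne, ?_⟩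
          rw [hdeg2, h2, succ_nsmul']
      exact fun j => (main j).1
    have hcontr := hiter p
    rw [hpow] at hcontr
    exact hcontr rfl


lemma xOp_val (i : Fin n) :
    ((xOp K n i : DiffOps K n) : Module.End K (MvPolynomial (Fin n) K)) = mulOp K n (X i) := rfl

lemma hasseOp_val (α : Fin n →₀ ℕ) :
    ((hasseOp K n α : DiffOps K n) : Module.End K (MvPolynomial (Fin n) K)) = hasse K n α := rfl

lemma mulOp_zero' : mulOp K n (0 : MvPolynomial (Fin n) K) = 0 := by
  refine LinearMap.ext fun f => ?_
  show (0 : MvPolynomial (Fin n) K) * f = 0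
  rw [zero_mul]


end AuxiliaryLemmas

set_option maxHeartbeats 1000000 in
set_option synthInstance.maxHeartbeats 400000 in
/-- **Theorem (rigidity of `Aut_K(D(P_n))`).**
Let `K` be a field of characteristic `p > 0` and `σ, τ` `K`-algebra automorphisms of
`D(P_n)`.  Then `σ = τ` iff `σ(x_i) = τ(x_i)` for `i = 1,…,n` (where `x_i` is the
multiplication operator by `x_i`). -/
theorem diffOps_aut_rigidity
    {K : Type*} [Field K] {n : ℕ} (p : ℕ) (hp : 0 < p) [CharP K p]
    (σ τ : DiffOps K n ≃ₐ[K] DiffOps K n) :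
    σ = τ ↔ ∀ i : Fin n, σ (xOp K n i) = τ (xOp K n i) := by
  constructor
  · intro h i; rw [h]
  · intro hx
    haveI : NeZero p := ⟨hp.ne'⟩
    haveI hfact : Fact p.Prime := CharP.char_is_prime_of_pos K p
    set ρ : DiffOps K n ≃ₐ[K] DiffOps K n := σ.trans τ.symm with hρ
    have hρx : ∀ i, ρ (xOp K n i) = xOp K n i := by
      intro i
      show τ.symm (σ (xOp K n i)) = xOp K n i
      rw [hx i, AlgEquiv.symm_apply_apply]
    -- Step 1: ρ fixes the hasse operators of single type, by induction on k
    have hfixd : ∀ (k : ℕ) (i : Fin n), ρ (hasseOp K n (Finsupp.single i k))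
        = hasseOp K n (Finsupp.single i k) := by
      intro k
      induction k with
      | zero =>
        intro i
        have h0 : hasseOp K n (Finsupp.single i 0) = 1 := by
          apply Subtype.ext
          rw [hasseOp_val, Finsupp.single_zero, hasse_zero']
          rfl
        rw [h0, map_one]
      | succ k ih =>
        intro i
        have hcomm : ∀ j, ((ρ (hasseOp K n (Finsupp.single i (k+1)))).val
              - hasse K n (Finsupp.single i (k+1))) * mulOp K n (X j)
            = mulOp K n (X j) * ((ρ (hasseOp K n (Finsupp.single i (k+1)))).val
              - hasse K n (Finsupp.single i (k+1))) := by
          intro j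
          by_cases hji : j = i
          · subst hji
            have hTc : hasseOp K n (Finsupp.single j (k+1)) * xOp K n j
                = xOp K n j * hasseOp K n (Finsupp.single j (k+1))
                  + hasseOp K n (Finsupp.single j k) := by
              apply Subtype.ext
              simp only [MulMemClass.coe_mul, AddMemClass.coe_add, xOp_val, hasseOp_val]
              exact hasse_single_comm_X_self j k
            have h0 := congrArg ρ hTc
            rw [map_mul ρ, map_add ρ, map_mul ρ, hρx j, ih j] at h0
            have hvals := congrArg Subtype.val h0
            simp only [MulMemClass.coe_mul, AddMemClass.coe_add, xOp_val, hasseOp_val] at hvals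
            rw [sub_mul, mul_sub, hvals, hasse_single_comm_X_self j k]
            abel
          · have hTc : hasseOp K n (Finsupp.single i (k+1)) * xOp K n j
                = xOp K n j * hasseOp K n (Finsupp.single i (k+1)) := by
              apply Subtype.ext
              simp only [MulMemClass.coe_mul, xOp_val, hasseOp_val]
              exact hasse_single_comm_X i j (k+1) hji
            have h0 := congrArg ρ hTc
            rw [map_mul ρ, map_mul ρ, hρx j] at h0
            have hvals := congrArg Subtype.val h0
            simp only [MulMemClass.coe_mul, xOp_val, hasseOp_val] at hvals
            rw [sub_mul, mul_sub, hvals, hasse_single_comm_X i j (k+1) hji]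
        have hvform := eq_mulOp_of_commute _ hcomm
        set g := (((ρ (hasseOp K n (Finsupp.single i (k+1)))).val
          - hasse K n (Finsupp.single i (k+1)))) 1 with hgdef
        have huval : (ρ (hasseOp K n (Finsupp.single i (k+1)))).val
            = hasse K n (Finsupp.single i (k+1)) + mulOp K n g := by
          rw [← hvform, add_sub_cancel]
        have htp : hasse K n (Finsupp.single i (k+1)) ^ p = 0 :=
          hasse_single_pow_char' p i (k+1) (Nat.succ_ne_zero k)
        have hTp : hasseOp K n (Finsupp.single i (k+1)) ^ p = 0 := by
          apply Subtype.ext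
          rw [SubmonoidClass.coe_pow, hasseOp_val, htp]
          rfl
        have hup : ρ (hasseOp K n (Finsupp.single i (k+1))) ^ p = 0 := by
          rw [← map_pow ρ, hTp, map_zero]
        have hpow : (hasse K n (Finsupp.single i (k+1)) + mulOp K n g) ^ p = 0 := by
          rw [← huval]
          have h2 := congrArg Subtype.val hup
          rwa [SubmonoidClass.coe_pow] at h2
        have hg0 : g = 0 := key_lemma p i (k+1) htp g hpow
        apply Subtype.ext
        rw [huval, hg0, mulOp_zero', add_zero, hasseOp_val]
    -- Step 2: ρ fixes all hasse operators
    have hfixh : ∀ α : Fin n →₀ ℕ, ρ (hasseOp K n α) = hasseOp K n α := by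
      intro α
      induction α using Finsupp.induction with
      | zero =>
        have h0 : hasseOp K n (0 : Fin n →₀ ℕ) = 1 := by
          apply Subtype.ext
          rw [hasseOp_val, hasse_zero']
          rfl
        rw [h0, map_one]
      | single_add i b f hif hb ihf =>
        have hsplit : hasseOp K n (Finsupp.single i b + f)
            = hasseOp K n (Finsupp.single i b) * hasseOp K n f := by
          apply Subtype.ext
          simp only [MulMemClass.coe_mul, hasseOp_val]
          rw [hasse_mul]
          have hcoeff : (∏ m, (((Finsupp.single i b + f)) m).choose
              ((Finsupp.single i b) m)) = 1 := by
            rw [prod_single_choose, Finsupp.add_apply, Finsupp.single_eq_same,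
              Finsupp.notMem_support_iff.mp hif, add_zero, Nat.choose_self]
          rw [hcoeff, one_smul]
        rw [hsplit, map_mul ρ, hfixd b i, ihf]
    -- Step 3: ρ is the identity
    have hfix : ∀ d : DiffOps K n, ρ d = d := by
      have htop : AlgHom.equalizer (ρ : DiffOps K n →ₐ[K] DiffOps K n)
          (AlgHom.id K (DiffOps K n)) = ⊤ := by
        rw [eq_top_iff]; refine le_trans (Algebra.adjoin_adjoin_coe_preimage (R := K)
          (s := Set.range (fun i : Fin n => mulOp K n (X i)) ∪ Set.range (hasse K n))).ge ?_
        refine Algebra.adjoin_le ?_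
        rintro x hx
        rcases hx with ⟨i, hi⟩ | ⟨α, hα⟩
        · have hxi : x = xOp K n i := Subtype.ext hi.symm
          show ρ x = x
          rw [hxi]; exact hρx i
        · have hxa : x = hasseOp K n α := Subtype.ext hα.symm
          show ρ x = x
          rw [hxa]; exact hfixh α
      intro d
      have hd : d ∈ AlgHom.equalizer (ρ : DiffOps K n →ₐ[K] DiffOps K n)
          (AlgHom.id K (DiffOps K n)) := htop ▸ Algebra.mem_top
      exact hd
    apply AlgEquiv.ext
    intro d
    have h1 : τ.symm (σ d) = d := hfix d
    calc σ d = τ (τ.symm (σ d)) := (τ.apply_symm_apply _).symm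
    _ = τ d := by rw [h1]
end

section
/- Let K be a field of characteristic p > 0. There exists an injective ring homomorphism F_x : D(P_n) → D(P_n) (the canonical Frobenius) such that F_x(f) = f^p for every multiplication operator f ∈ P_n and F_x(∂^[α]) = ∂^[pα] for every α ∈ ℕ^n; equivalently, the K^{1/p}-semilinear assignment x^α ∂^[β] ↦ x^{pα} ∂^[pβ] on the basis, with λ ↦ λ^p on K, defines a ring endomorphism of D(P_n) extending the Frobenius a ↦ a^p of P_n. -/
open MvPolynomial

variable (K : Type*) [Field K] (n : ℕ)

section FrobeniusConstruction

/-- Componentwise division of exponents by `p`. -/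
noncomputable def divP (p : ℕ) {m : ℕ} (β : Fin m →₀ ℕ) : Fin m →₀ ℕ :=
  β.mapRange (· / p) (Nat.zero_div p)

/-- Componentwise remainder of exponents mod `p`. -/
noncomputable def modP (p : ℕ) {m : ℕ} (β : Fin m →₀ ℕ) : Fin m →₀ ℕ :=
  β.mapRange (· % p) (Nat.zero_mod p)

@[simp] lemma divP_apply (p : ℕ) {m : ℕ} (β : Fin m →₀ ℕ) (i : Fin m) :
    divP p β i = β i / p := rfl

@[simp] lemma modP_apply (p : ℕ) {m : ℕ} (β : Fin m →₀ ℕ) (i : Fin m) :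
    modP p β i = β i % p := rfl

lemma modP_add_smul_divP (p : ℕ) {m : ℕ} (β : Fin m →₀ ℕ) :
    modP p β + p • divP p β = β := by
  ext i
  simp [Finsupp.smul_apply, Nat.mod_add_div]

lemma modP_shift {p : ℕ} (hp : 0 < p) {m : ℕ} (r u : Fin m →₀ ℕ) (hr : ∀ i, r i < p) :
    modP p (r + p • u) = r := by
  ext i
  simp only [modP_apply, Finsupp.add_apply, Finsupp.smul_apply, smul_eq_mul]
  rw [Nat.add_mul_mod_self_left, Nat.mod_eq_of_lt (hr i)]

lemma divP_shift {p : ℕ} (hp : 0 < p) {m : ℕ} (r u : Fin m →₀ ℕ) (hr : ∀ i, r i < p) :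
    divP p (r + p • u) = u := by
  ext i
  simp only [divP_apply, Finsupp.add_apply, Finsupp.smul_apply, smul_eq_mul]
  rw [Nat.add_mul_div_left _ _ hp, Nat.div_eq_of_lt (hr i), zero_add]

/-- The semilinear Frobenius twist of an endomorphism of `P_n`:
`Fr p D` sends `x^(p q + r)` (with `r` the mod-`p` part of the exponent)
to `x^r * (D x^q)^p`. -/
noncomputable def Fr (p : ℕ) (D : Module.End K (MvPolynomial (Fin n) K)) :
    Module.End K (MvPolynomial (Fin n) K) :=
  (basisMonomials (Fin n) K).constr K fun β : Fin n →₀ ℕ =>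
    monomial (modP p β) (1 : K) * (D (monomial (divP p β) 1)) ^ p

lemma basisMonomials_apply (β : Fin n →₀ ℕ) :
    (basisMonomials (Fin n) K) β = monomial β (1 : K) := by
  rw [coe_basisMonomials]

lemma Fr_apply (p : ℕ) (D : Module.End K (MvPolynomial (Fin n) K)) (β : Fin n →₀ ℕ) :
    Fr K n p D (monomial β 1) =
      monomial (modP p β) (1 : K) * (D (monomial (divP p β) 1)) ^ p := by
  rw [← basisMonomials_apply, Fr, Module.Basis.constr_basis]

lemma hasse_apply (α β : Fin n →₀ ℕ) :
    hasse K n α (monomial β 1) =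
      (∏ i, (β i).choose (α i)) • monomial (β - α) (1 : K) := by
  rw [← basisMonomials_apply, hasse, Module.Basis.constr_basis]

variable {p : ℕ} [Fact p.Prime] [CharP K p]

lemma charP_poly : CharP (MvPolynomial (Fin n) K) p :=
  charP_of_injective_ringHom (MvPolynomial.C_injective (Fin n) K) p

/-- Key compatibility: `Fr p D (x^r * g^p) = x^r * (D g)^p` for `r` with entries `< p`. -/
lemma Fr_aux (D : Module.End K (MvPolynomial (Fin n) K)) (r : Fin n →₀ ℕ)
    (hr : ∀ i, r i < p) (g : MvPolynomial (Fin n) K) :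
    Fr K n p D (monomial r 1 * g ^ p) = monomial r 1 * (D g) ^ p := by
  haveI := charP_poly K n (p := p)
  haveI : ExpChar (MvPolynomial (Fin n) K) p := .prime (Fact.out : p.Prime)
  have hp : 0 < p := (Fact.out : p.Prime).pos
  induction g using MvPolynomial.induction_on' with
  | monomial u a =>
      have h1 : monomial r (1:K) * (monomial u a) ^ p
          = (a ^ p) • monomial (r + p • u) (1:K) := by
        rw [monomial_pow, monomial_mul, smul_monomial, one_mul, smul_eq_mul, mul_one]
      have h2 : (monomial u a : MvPolynomial (Fin n) K) = a • monomial u 1 := by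
        rw [smul_monomial, smul_eq_mul, mul_one]
      rw [h1, map_smul, Fr_apply, modP_shift hp r u hr, divP_shift hp r u hr,
        h2, map_smul, smul_pow, mul_smul_comm]
  | add f g hf hg =>
      rw [add_pow_char, mul_add, map_add, hf, hg, map_add, add_pow_char, mul_add]

lemma Fr_mul (D₁ D₂ : Module.End K (MvPolynomial (Fin n) K)) :
    Fr K n p (D₁ * D₂) = Fr K n p D₁ * Fr K n p D₂ := by
  have hp : 0 < p := (Fact.out : p.Prime).pos
  apply (basisMonomials (Fin n) K).ext
  intro β
  rw [basisMonomials_apply, Module.End.mul_apply, Fr_apply, Module.End.mul_apply,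
    Fr_apply, Fr_aux K n D₁ _ (fun i => Nat.mod_lt _ hp)]

lemma Fr_one : Fr K n p (1 : Module.End K (MvPolynomial (Fin n) K)) = 1 := by
  apply (basisMonomials (Fin n) K).ext
  intro β
  rw [basisMonomials_apply, Fr_apply]
  simp only [Module.End.one_apply, monomial_pow, one_pow, monomial_mul, mul_one, one_mul]
  rw [modP_add_smul_divP]

lemma Fr_add (D₁ D₂ : Module.End K (MvPolynomial (Fin n) K)) :
    Fr K n p (D₁ + D₂) = Fr K n p D₁ + Fr K n p D₂ := by
  haveI := charP_poly K n (p := p)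
  haveI : ExpChar (MvPolynomial (Fin n) K) p := .prime (Fact.out : p.Prime)
  apply (basisMonomials (Fin n) K).ext
  intro β
  rw [basisMonomials_apply]
  simp only [Fr_apply, LinearMap.add_apply]
  rw [add_pow_char, mul_add]

lemma Fr_zero : Fr K n p (0 : Module.End K (MvPolynomial (Fin n) K)) = 0 := by
  have hp : 0 < p := (Fact.out : p.Prime).pos
  apply (basisMonomials (Fin n) K).ext
  intro β
  rw [basisMonomials_apply, Fr_apply]
  simp [zero_pow hp.ne']

lemma Fr_mulOp (f : MvPolynomial (Fin n) K) :
    Fr K n p (mulOp K n f) = mulOp K n (f ^ p) := by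
  apply (basisMonomials (Fin n) K).ext
  intro β
  rw [basisMonomials_apply, Fr_apply]
  simp only [mulOp, LinearMap.mulLeft_apply]
  rw [mul_pow, monomial_pow, one_pow, mul_left_comm, monomial_mul, one_mul,
    modP_add_smul_divP]

lemma natCast_pow_p (N : ℕ) :
    ((N : MvPolynomial (Fin n) K)) ^ p = (N : MvPolynomial (Fin n) K) := by
  haveI := charP_poly K n (p := p)
  have h : ((N ^ p : ℕ) : ZMod p) = ((N : ℕ) : ZMod p) := by
    push_cast
    exact ZMod.pow_card (N : ZMod p)
  rw [← Nat.cast_pow]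
  exact CharP.natCast_eq_natCast' _ p ((ZMod.natCast_eq_natCast_iff _ _ _).mp h)

lemma Fr_hasse (α : Fin n →₀ ℕ) :
    Fr K n p (hasse K n α) = hasse K n (p • α) := by
  have hp : 0 < p := (Fact.out : p.Prime).pos
  haveI := charP_poly K n (p := p)
  apply (basisMonomials (Fin n) K).ext
  intro β
  rw [basisMonomials_apply, Fr_apply, hasse_apply, hasse_apply]
  rw [smul_pow, monomial_pow, one_pow, nsmul_eq_mul, Nat.cast_pow,
    natCast_pow_p K n, mul_left_comm, monomial_mul, one_mul, nsmul_eq_mul]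
  by_cases hle : ∀ i, α i ≤ divP p β i
  · have hexp : modP p β + p • (divP p β - α) = β - p • α := by
      ext i
      simp only [Finsupp.add_apply, Finsupp.smul_apply, Finsupp.tsub_apply, smul_eq_mul,
        modP_apply, divP_apply]
      have hβ : p * (β i / p) + β i % p = β i := Nat.div_add_mod (β i) p
      have hle' := hle i
      simp only [divP_apply] at hle'
      have h3 : p * (β i / p - α i) = p * (β i / p) - p * α i := Nat.mul_sub ..
      have h4 : p * α i ≤ p * (β i / p) := Nat.mul_le_mul_left p hle'
      omega
    rw [hexp]
    have key : ∀ i, (β i).choose ((p • α) i) ≡ (divP p β i).choose (α i) [MOD p] := by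
      intro i
      have hl := Choose.choose_modEq_choose_mod_mul_choose_div
        (p := p) (n := β i) (k := p * α i)
      have h1 : (p * α i) % p = 0 := Nat.mul_mod_right p (α i)
      have h2 : (p * α i) / p = α i := Nat.mul_div_cancel_left _ hp
      rw [h1, h2, Nat.choose_zero_right, Nat.cast_one, one_mul] at hl
      have hmod : (β i).choose (p * α i) ≡ (β i / p).choose (α i) [MOD p] :=
        Int.natCast_modEq_iff.mp (by exact_mod_cast hl)
      simpa [Finsupp.smul_apply] using hmod
    have hprod : (∏ i, (β i).choose ((p • α) i)) ≡ (∏ i, (divP p β i).choose (α i)) [MOD p] := by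
      classical
      have hgen : ∀ s : Finset (Fin n),
          (∏ i ∈ s, (β i).choose ((p • α) i)) ≡ (∏ i ∈ s, (divP p β i).choose (α i)) [MOD p] := by
        intro s
        induction s using Finset.induction_on with
        | empty =>
            rw [Finset.prod_empty, Finset.prod_empty]
        | insert _ _ hx ih =>
            rw [Finset.prod_insert hx, Finset.prod_insert hx]
            exact (key _).mul ih
      exact hgen Finset.univ
    have hMN : ((∏ i, (β i).choose ((p • α) i) : ℕ) : MvPolynomial (Fin n) K)
        = ((∏ i, (divP p β i).choose (α i) : ℕ) : MvPolynomial (Fin n) K) :=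
      CharP.natCast_eq_natCast' _ p hprod
    rw [hMN]
  · push_neg at hle
    obtain ⟨i, hi⟩ := hle
    have hN : (∏ j, (divP p β j).choose (α j)) = 0 :=
      Finset.prod_eq_zero (Finset.mem_univ i) (Nat.choose_eq_zero_of_lt hi)
    have hM : (∏ j, (β j).choose ((p • α) j)) = 0 := by
      refine Finset.prod_eq_zero (Finset.mem_univ i) (Nat.choose_eq_zero_of_lt ?_)
      simp only [Finsupp.smul_apply, smul_eq_mul]
      have hβ : p * (β i / p) + β i % p = β i := Nat.div_add_mod (β i) p
      have hri : β i % p < p := Nat.mod_lt _ hp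
      have hqi : β i / p < α i := by simpa only [divP_apply] using hi
      have h5 : p * (β i / p + 1) ≤ p * α i := Nat.mul_le_mul_left p (Nat.succ_le_of_lt hqi)
      have h6 : p * (β i / p + 1) = p * (β i / p) + p := by ring
      omega
    rw [hN, hM]
    simp

lemma Fr_mem {D : Module.End K (MvPolynomial (Fin n) K)} (hD : D ∈ DiffOps K n) :
    Fr K n p D ∈ DiffOps K n := by
  induction hD using Algebra.adjoin_induction with
  | mem x hx =>
      rcases hx with ⟨i, rfl⟩ | ⟨α, rfl⟩
      · rw [Fr_mulOp]
        exact mulOp_mem K n _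
      · rw [Fr_hasse]
        exact (hasseOp K n (p • α)).2
  | algebraMap r =>
      have h : (algebraMap K (Module.End K (MvPolynomial (Fin n) K)) r)
          = mulOp K n (C r) := by
        refine LinearMap.ext fun g => ?_
        simp [mulOp, Module.algebraMap_end_apply, smul_eq_C_mul]
      rw [h, Fr_mulOp]
      exact mulOp_mem K n _
  | add x y hx hy ihx ihy =>
      rw [Fr_add]
      exact add_mem ihx ihy
  | mul x y hx hy ihx ihy =>
      rw [Fr_mul]
      exact mul_mem ihx ihy

lemma Fr_injective : Function.Injective (Fr K n p) := by
  have hp : 0 < p := (Fact.out : p.Prime).pos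
  haveI := charP_poly K n (p := p)
  haveI : ExpChar (MvPolynomial (Fin n) K) p := .prime (Fact.out : p.Prime)
  intro D₁ D₂ h
  apply (basisMonomials (Fin n) K).ext
  intro q
  rw [basisMonomials_apply]
  have h1 : modP p (p • q) = 0 := by
    ext i; simp [Finsupp.smul_apply, Nat.mul_mod_right]
  have h2 : divP p (p • q) = q := by
    ext i; simp [Finsupp.smul_apply, Nat.mul_div_cancel_left _ hp]
  have := congrArg (fun (E : Module.End K (MvPolynomial (Fin n) K)) =>
    E (monomial (p • q) 1)) h
  simp only [Fr_apply, h1, h2] at this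
  have hpow : (D₁ (monomial q 1)) ^ p = (D₂ (monomial q 1)) ^ p := by
    have hmono : (monomial (0 : Fin n →₀ ℕ) (1:K)) = 1 := by
      simp [monomial_zero']
    rwa [hmono, one_mul, one_mul] at this
  have hsub : (D₁ (monomial q 1) - D₂ (monomial q 1)) ^ p = 0 := by
    rw [sub_pow_char, hpow, sub_self]
  have := pow_eq_zero_iff hp.ne' |>.mp hsub
  exact sub_eq_zero.mp this

end FrobeniusConstruction

/-- **The canonical Frobenius on `D(P_n)`.**
Let `K` be a field of characteristic `p > 0`.  There exists an injective ring
homomorphism `F_x : D(P_n) → D(P_n)` with `F_x(f) = f^p` for every multiplication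
operator `f ∈ P_n` and `F_x(∂^[α]) = ∂^[pα]` for every `α ∈ ℕⁿ`; it extends the
Frobenius `a ↦ a^p` of `P_n`. -/
theorem canonical_frobenius_exists
    {K : Type*} [Field K] {n : ℕ} (p : ℕ) (hp : 0 < p) [CharP K p] :
    ∃ F : DiffOps K n →+* DiffOps K n,
      Function.Injective F ∧
      (∀ f : MvPolynomial (Fin n) K, F (mOp K n f) = mOp K n (f ^ p)) ∧
      (∀ α : Fin n →₀ ℕ, F (hasseOp K n α) = hasseOp K n (p • α)) := by
  haveI : NeZero p := ⟨hp.ne'⟩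
  haveI : Fact p.Prime := CharP.char_is_prime_of_pos K p
  refine ⟨{ toFun := fun d => ⟨Fr K n p d.1, Fr_mem K n d.2⟩,
            map_one' := Subtype.ext (Fr_one K n),
            map_mul' := fun a b => Subtype.ext (Fr_mul K n a.1 b.1),
            map_zero' := Subtype.ext (Fr_zero K n),
            map_add' := fun a b => Subtype.ext (Fr_add K n a.1 b.1) }, ?_, ?_, ?_⟩
  · intro a b hab
    exact Subtype.ext (Fr_injective K n (congrArg Subtype.val hab))
  · intro f
    exact Subtype.ext (Fr_mulOp K n f)
  · intro α
    exact Subtype.ext (Fr_hasse K n α)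
end
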